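/- arXiv:1402.6032 — 7 statements merged into one kernel-verified Lean document; each statement's English description precedes it below -/
import Mathlib

section
/- Let A be a ring and e ∈ A an idempotent with AeA = A. Let M be a right A-module and N a left A-module. Then the natural map Me ⊗_{eAe} eN → M ⊗_A N given by me ⊗ en ↦ me ⊗ en is an isomorphism of abelian groups. -/
noncomputable section

variable (A : Type*) [Ring A] (e : A)
variable (M : Type*) [AddCommGroup M] [Module Aᵐᵒᵖ M]
variable (N : Type*) [AddCommGroup N] [Module A N]

/-- The additive map `m ↦ m·e` on a right `A`-module `M`. -/
def rightMulBy : M →+ M :=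
  AddMonoidHom.mk' (fun m => MulOpposite.op e • m) (fun a b => smul_add _ a b)

/-- The additive map `n ↦ e·n` on a left `A`-module `N`. -/
def leftMulBy : N →+ N :=
  AddMonoidHom.mk' (fun n => e • n) (fun a b => smul_add _ a b)

/-- `Me = {m·e : m ∈ M}` as an additive subgroup of `M`. -/
def Msube : AddSubgroup M := (rightMulBy A e M).range

/-- `eN = {e·n : n ∈ N}` as an additive subgroup of `N`. -/
def eSubN : AddSubgroup N := (leftMulBy A e N).range

/-- The defining relations of the tensor product `M ⊗_A N` of a right `A`-module and a
left `A`-module: biadditivity and `A`-balancedness. -/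
def tensRelA : Set (FreeAbelianGroup (M × N)) :=
  {x | ∃ m m' n, x = FreeAbelianGroup.of (m + m', n) - FreeAbelianGroup.of (m, n)
        - FreeAbelianGroup.of (m', n)} ∪
  {x | ∃ m n n', x = FreeAbelianGroup.of (m, n + n') - FreeAbelianGroup.of (m, n)
        - FreeAbelianGroup.of (m, n')} ∪
  {x | ∃ (m : M) (n : N) (a : A),
    x = FreeAbelianGroup.of (MulOpposite.op a • m, n) - FreeAbelianGroup.of (m, a • n)}

/-- The tensor product `M ⊗_A N` over the (noncommutative) ring `A`, as an abelian
group: the quotient of the free abelian group on `M × N` by biadditivity and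
balancedness relations. -/
def TensA := FreeAbelianGroup (M × N) ⧸ AddSubgroup.closure (tensRelA A M N)

/-- The defining relations of `Me ⊗_{eAe} eN`: biadditivity and `eAe`-balancedness. -/
def tensRelE : Set (FreeAbelianGroup (Msube A e M × eSubN A e N)) :=
  {x | ∃ m m' n, x = FreeAbelianGroup.of (m + m', n) - FreeAbelianGroup.of (m, n)
        - FreeAbelianGroup.of (m', n)} ∪
  {x | ∃ m n n', x = FreeAbelianGroup.of (m, n + n') - FreeAbelianGroup.of (m, n)
        - FreeAbelianGroup.of (m, n')} ∪
  {x | ∃ (m mr : Msube A e M) (n rn : eSubN A e N) (a : A),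
    (mr : M) = MulOpposite.op (e * a * e) • (m : M) ∧
    ((rn : N) = (e * a * e) • (n : N)) ∧
    x = FreeAbelianGroup.of (mr, n) - FreeAbelianGroup.of (m, rn)}

/-- The tensor product `Me ⊗_{eAe} eN` over the corner ring `eAe`, as an abelian
group. -/
def TensE := FreeAbelianGroup (Msube A e M × eSubN A e N) ⧸
  AddSubgroup.closure (tensRelE A e M N)

instance : AddCommGroup (TensA A M N) := by unfold TensA; infer_instance
instance : AddCommGroup (TensE A e M N) := by unfold TensE; infer_instance

/-! ### Auxiliary definitions and lemmas -/

section Aux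

open MulOpposite FreeAbelianGroup

/-- generator of `TensA` -/
def tA (m : M) (n : N) : TensA A M N := QuotientAddGroup.mk (FreeAbelianGroup.of (m, n))

/-- generator of `TensE` -/
def tE (x : Msube A e M) (y : eSubN A e N) : TensE A e M N :=
  QuotientAddGroup.mk (FreeAbelianGroup.of (x, y))

lemma tA_add_left (m m' : M) (n : N) : tA A M N (m + m') n = tA A M N m n + tA A M N m' n := by
  have h : (QuotientAddGroup.mk (FreeAbelianGroup.of (m + m', n)) : TensA A M N)
      = QuotientAddGroup.mk (FreeAbelianGroup.of (m, n) + FreeAbelianGroup.of (m', n)) := by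
    refine (QuotientAddGroup.eq_iff_sub_mem).mpr (AddSubgroup.subset_closure ?_)
    exact Or.inl (Or.inl ⟨m, m', n, by abel⟩)
  exact h.trans (QuotientAddGroup.mk_add _ _ _)

lemma tA_add_right (m : M) (n n' : N) : tA A M N m (n + n') = tA A M N m n + tA A M N m n' := by
  have h : (QuotientAddGroup.mk (FreeAbelianGroup.of (m, n + n')) : TensA A M N)
      = QuotientAddGroup.mk (FreeAbelianGroup.of (m, n) + FreeAbelianGroup.of (m, n')) := by
    refine (QuotientAddGroup.eq_iff_sub_mem).mpr (AddSubgroup.subset_closure ?_)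
    exact Or.inl (Or.inr ⟨m, n, n', by abel⟩)
  exact h.trans (QuotientAddGroup.mk_add _ _ _)

lemma tA_balanced (a : A) (m : M) (n : N) :
    tA A M N (MulOpposite.op a • m) n = tA A M N m (a • n) := by
  refine (QuotientAddGroup.eq_iff_sub_mem).mpr (AddSubgroup.subset_closure ?_)
  exact Or.inr ⟨m, n, a, rfl⟩

/-- `tA` as a hom in the first variable. -/
def tAL (n : N) : M →+ TensA A M N :=
  AddMonoidHom.mk' (fun m => tA A M N m n) (fun m m' => tA_add_left A M N m m' n)

/-- `tA` as a hom in the second variable. -/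
def tAR (m : M) : N →+ TensA A M N :=
  AddMonoidHom.mk' (fun n => tA A M N m n) (fun n n' => tA_add_right A M N m n n')

lemma tE_add_left (x x' : Msube A e M) (y : eSubN A e N) :
    tE A e M N (x + x') y = tE A e M N x y + tE A e M N x' y := by
  have h : (QuotientAddGroup.mk (FreeAbelianGroup.of (x + x', y)) : TensE A e M N)
      = QuotientAddGroup.mk (FreeAbelianGroup.of (x, y) + FreeAbelianGroup.of (x', y)) := by
    refine (QuotientAddGroup.eq_iff_sub_mem).mpr (AddSubgroup.subset_closure ?_)
    exact Or.inl (Or.inl ⟨x, x', y, by abel⟩)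
  exact h.trans (QuotientAddGroup.mk_add _ _ _)

lemma tE_add_right (x : Msube A e M) (y y' : eSubN A e N) :
    tE A e M N x (y + y') = tE A e M N x y + tE A e M N x y' := by
  have h : (QuotientAddGroup.mk (FreeAbelianGroup.of (x, y + y')) : TensE A e M N)
      = QuotientAddGroup.mk (FreeAbelianGroup.of (x, y) + FreeAbelianGroup.of (x, y')) := by
    refine (QuotientAddGroup.eq_iff_sub_mem).mpr (AddSubgroup.subset_closure ?_)
    exact Or.inl (Or.inr ⟨x, y, y', by abel⟩)
  exact h.trans (QuotientAddGroup.mk_add _ _ _)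

/-- `tE` as a hom in the first variable. -/
def tEL (y : eSubN A e N) : Msube A e M →+ TensE A e M N :=
  AddMonoidHom.mk' (fun x => tE A e M N x y) (fun x x' => tE_add_left A e M N x x' y)

/-- `tE` as a hom in the second variable. -/
def tER (x : Msube A e M) : eSubN A e N →+ TensE A e M N :=
  AddMonoidHom.mk' (fun y => tE A e M N x y) (fun y y' => tE_add_right A e M N x y y')

/-- right action of `e*a*e` on `Me`. -/
def rAct (a : A) (x : Msube A e M) : Msube A e M :=
  ⟨MulOpposite.op (e * a * e) • (x : M),
    ⟨MulOpposite.op (e * a) • (x : M), by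
      show MulOpposite.op e • MulOpposite.op (e * a) • (x : M)
        = MulOpposite.op (e * a * e) • (x : M)
      rw [← mul_smul, ← MulOpposite.op_mul]⟩⟩

/-- left action of `e*a*e` on `eN`. -/
def lAct (a : A) (y : eSubN A e N) : eSubN A e N :=
  ⟨(e * a * e) • (y : N),
    ⟨(a * e) • (y : N), by
      show e • (a * e) • (y : N) = (e * a * e) • (y : N)
      rw [← mul_smul, ← mul_assoc]⟩⟩

lemma tE_balanced (a : A) (x : Msube A e M) (y : eSubN A e N) :
    tE A e M N (rAct A e M a x) y = tE A e M N x (lAct A e N a y) := by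
  refine (QuotientAddGroup.eq_iff_sub_mem).mpr (AddSubgroup.subset_closure ?_)
  exact Or.inr ⟨x, rAct A e M a x, y, lAct A e N a y, a, rfl, rfl, rfl⟩

/-- `m ↦ m·(c·e)` landing in `Me`. -/
def muE (c : A) (m : M) : Msube A e M :=
  ⟨MulOpposite.op (c * e) • m,
    ⟨MulOpposite.op c • m, by
      show MulOpposite.op e • MulOpposite.op c • m = MulOpposite.op (c * e) • m
      rw [← mul_smul, ← MulOpposite.op_mul]⟩⟩

/-- `n ↦ (e·c)·n` landing in `eN`. -/
def nuE (c : A) (n : N) : eSubN A e N :=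
  ⟨(e * c) • n, ⟨c • n, by show e • c • n = (e * c) • n; rw [← mul_smul]⟩⟩

lemma muE_add (c : A) (m m' : M) :
    muE A e M c (m + m') = muE A e M c m + muE A e M c m' := by
  apply Subtype.ext; simpa [muE] using smul_add _ m m'

lemma nuE_add (c : A) (n n' : N) :
    nuE A e N c (n + n') = nuE A e N c n + nuE A e N c n' := by
  apply Subtype.ext; simpa [nuE] using smul_add _ n n'

variable (he : IsIdempotentElem e)
include he

lemma Msube_smul_e (x : Msube A e M) : MulOpposite.op e • (x : M) = (x : M) := by
  obtain ⟨m, hm⟩ := x.2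
  have : (x : M) = MulOpposite.op e • m := hm.symm
  rw [this, ← mul_smul, ← MulOpposite.op_mul, he]

lemma eSubN_smul_e (y : eSubN A e N) : e • (y : N) = (y : N) := by
  obtain ⟨n, hn⟩ := y.2
  have : (y : N) = e • n := hn.symm
  rw [this, ← mul_smul, he]

section Rep

variable {k : ℕ} (a b : Fin k → A) (hab : ∑ i, a i * e * b i = 1)
include hab

/-- key decomposition: `m·(r·aᵢ·e) = ∑ⱼ (m·aⱼ·e)·(e·bⱼ·r·aᵢ·e)`. -/
lemma muE_smul_rep (r : A) (m : M) (i : Fin k) :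
    muE A e M (a i) (MulOpposite.op r • m)
      = ∑ j, rAct A e M (b j * r * a i) (muE A e M (a j) m) := by
  apply Subtype.ext
  rw [AddSubmonoidClass.coe_finset_sum]
  have h1 : ∀ j, ((rAct A e M (b j * r * a i) (muE A e M (a j) m) : Msube A e M) : M)
      = MulOpposite.op ((a j * e * b j) * (r * (a i * e))) • m := by
    intro j
    show MulOpposite.op (e * (b j * r * a i) * e) • MulOpposite.op (a j * e) • m = _
    rw [← mul_smul, ← MulOpposite.op_mul]
    congr 2
    rw [show a j * e * (e * (b j * r * a i) * e)
      = a j * ((e * e) * (b j * r * a i)) * e by simp only [mul_assoc], he]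
    simp only [mul_assoc]
  rw [Finset.sum_congr rfl fun j _ => h1 j]
  show MulOpposite.op (a i * e) • MulOpposite.op r • m = _
  rw [← mul_smul, ← MulOpposite.op_mul, ← Finset.sum_smul, ← Finset.op_sum,
    ← Finset.sum_mul, hab, one_mul]

lemma nuE_smul_rep (r : A) (n : N) (j : Fin k) :
    (∑ i, lAct A e N (b j * r * a i) (nuE A e N (b i) n)) = nuE A e N (b j) (r • n) := by
  apply Subtype.ext
  rw [AddSubmonoidClass.coe_finset_sum]
  have : ∀ i, ((lAct A e N (b j * r * a i) (nuE A e N (b i) n) : eSubN A e N) : N)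
      = ((e * (b j * r * a i) * e) * (e * b i)) • n := by
    intro i
    show (e * (b j * r * a i) * e) • (e * b i) • n = _
    rw [← mul_smul]
  rw [Finset.sum_congr rfl fun i _ => this i]
  show _ = (e * b j) • r • n
  rw [← mul_smul]
  have key : ∀ i, (e * (b j * r * a i) * e) * (e * b i) = (e * b j * r) * (a i * e * b i) := by
    intro i
    rw [show (e * (b j * r * a i) * e) * (e * b i)
      = e * (b j * (r * (a i * ((e * e) * b i)))) by simp only [mul_assoc], he]
    simp only [mul_assoc]
  simp only [key]
  rw [← Finset.sum_smul, ← Finset.mul_sum, hab, mul_one]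

end Rep

open Pointwise in
omit he in
lemma exists_rep (hfull : TwoSidedIdeal.span ({e} : Set A) = ⊤) :
    ∃ (k : ℕ) (a b : Fin k → A), ∑ i, a i * e * b i = 1 := by
  have h1 : (1 : A) ∈ TwoSidedIdeal.span ({e} : Set A) := hfull ▸ trivial
  rw [TwoSidedIdeal.mem_span_iff_mem_addSubgroup_closure] at h1
  have hmain : ∀ z ∈ AddSubgroup.closure ((Set.univ : Set A) * ({e} : Set A) * Set.univ),
      ∃ (l : List (A × A)), (l.map fun p => p.1 * e * p.2).sum = z := by
    intro z hz
    induction hz using AddSubgroup.closure_induction with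
    | mem x hx =>
      obtain ⟨y, ⟨u, -, v, hv, rfl⟩, w, -, rfl⟩ := hx
      rw [Set.mem_singleton_iff] at hv
      exact ⟨[(u, w)], by simp [hv]⟩
    | zero => exact ⟨[], by simp⟩
    | add x y _ _ hx hy =>
      obtain ⟨l1, hl1⟩ := hx; obtain ⟨l2, hl2⟩ := hy
      exact ⟨l1 ++ l2, by simp [hl1, hl2]⟩
    | neg x _ hx =>
      obtain ⟨l, hl⟩ := hx
      refine ⟨l.map fun p => (-p.1, p.2), ?_⟩
      rw [← hl, List.map_map]
      clear hl
      induction l with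
      | nil => simp
      | cons hd tl ih =>
        simp only [List.map_cons, List.sum_cons, neg_add, ih, Function.comp_apply]
        simp
  obtain ⟨l, hl⟩ := hmain 1 h1
  refine ⟨l.length, fun i => (l.get i).1, fun i => (l.get i).2, ?_⟩
  rw [← hl, ← List.sum_ofFn]
  congr 1
  rw [show (fun i => (l.get i).1 * e * (l.get i).2)
    = (fun p : A × A => p.1 * e * p.2) ∘ l.get from rfl]
  rw [← List.map_ofFn, List.ofFn_get]

end Aux

/-- Morita invariance of the tensor product: if `e ∈ A` is an idempotent with `AeA = A`,
`M` a right `A`-module and `N` a left `A`-module, then the natural additive map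
`Me ⊗_{eAe} eN → M ⊗_A N`, `me ⊗ en ↦ me ⊗ en`, is an isomorphism of abelian
groups. -/
theorem corner_tensor_equiv (he : IsIdempotentElem e)
    (hfull : TwoSidedIdeal.span ({e} : Set A) = ⊤) :
    ∃ φ : TensE A e M N →+ TensA A M N,
      (∀ (m : Msube A e M) (n : eSubN A e N),
        φ (QuotientAddGroup.mk (FreeAbelianGroup.of (m, n)))
          = QuotientAddGroup.mk (FreeAbelianGroup.of ((m : M), (n : N)))) ∧
      Function.Bijective φ := by
  classical
  -- Step 1: extract a representation 1 = ∑ aᵢ e bᵢ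
  obtain ⟨k, a, b, hab⟩ := exists_rep A e hfull
  -- Step 2: the forward map φ
  set f : FreeAbelianGroup (Msube A e M × eSubN A e N) →+ TensA A M N :=
    FreeAbelianGroup.lift (fun p => tA A M N (p.1 : M) (p.2 : N)) with hf
  have hfof : ∀ p, f (FreeAbelianGroup.of p) = tA A M N (p.1 : M) (p.2 : N) := by
    intro p; simp [hf]
  have hfker : AddSubgroup.closure (tensRelE A e M N) ≤ f.ker := by
    rw [AddSubgroup.closure_le]
    rintro x (((⟨m, m', n, rfl⟩ | ⟨m, n, n', rfl⟩) | ⟨m, mr, n, rn, c, h1, h2, rfl⟩)) <;>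
      simp only [SetLike.mem_coe, AddMonoidHom.mem_ker, map_sub, hfof]
    · rw [AddSubgroup.coe_add, tA_add_left]; abel
    · rw [AddSubgroup.coe_add, tA_add_right]; abel
    · rw [h1, h2, tA_balanced]; abel
  set φ : TensE A e M N →+ TensA A M N := QuotientAddGroup.lift _ f hfker with hφ
  have hφmk : ∀ (x : Msube A e M) (y : eSubN A e N),
      φ (QuotientAddGroup.mk (FreeAbelianGroup.of (x, y))) = tA A M N (x : M) (y : N) := by
    intro x y
    exact (QuotientAddGroup.lift_mk' _ hfker _).trans (hfof (x, y))
  -- Step 3: the inverse map ψ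
  set g0 : M × N → TensE A e M N :=
    fun p => ∑ i, tE A e M N (muE A e M (a i) p.1) (nuE A e N (b i) p.2) with hg0
  set g : FreeAbelianGroup (M × N) →+ TensE A e M N := FreeAbelianGroup.lift g0 with hg
  have hgof : ∀ p, g (FreeAbelianGroup.of p) = g0 p := by intro p; simp [hg]
  have hgker : AddSubgroup.closure (tensRelA A M N) ≤ g.ker := by
    rw [AddSubgroup.closure_le]
    rintro x (((⟨m, m', n, rfl⟩ | ⟨m, n, n', rfl⟩) | ⟨m, n, r, rfl⟩)) <;>
      simp only [SetLike.mem_coe, AddMonoidHom.mem_ker, map_sub, hgof, hg0]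
    · rw [sub_sub, sub_eq_zero, ← Finset.sum_add_distrib]
      refine Finset.sum_congr rfl fun i _ => ?_
      rw [muE_add, tE_add_left]
    · rw [sub_sub, sub_eq_zero, ← Finset.sum_add_distrib]
      refine Finset.sum_congr rfl fun i _ => ?_
      rw [nuE_add, tE_add_right]
    · rw [sub_eq_zero]
      -- balancedness: the double sum argument
      calc (∑ i, tE A e M N (muE A e M (a i) (MulOpposite.op r • m)) (nuE A e N (b i) n))
          = ∑ i, ∑ j, tE A e M N (rAct A e M (b j * r * a i) (muE A e M (a j) m))
              (nuE A e N (b i) n) := by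
            refine Finset.sum_congr rfl fun i _ => ?_
            rw [muE_smul_rep A e M he a b hab r m i]
            exact map_sum (tEL A e M N (nuE A e N (b i) n)) _ _
        _ = ∑ i, ∑ j, tE A e M N (muE A e M (a j) m)
              (lAct A e N (b j * r * a i) (nuE A e N (b i) n)) := by
            exact Finset.sum_congr rfl fun i _ => Finset.sum_congr rfl fun j _ =>
              tE_balanced A e M N _ _ _
        _ = ∑ j, ∑ i, tE A e M N (muE A e M (a j) m)
              (lAct A e N (b j * r * a i) (nuE A e N (b i) n)) := Finset.sum_comm
        _ = ∑ j, tE A e M N (muE A e M (a j) m) (nuE A e N (b j) (r • n)) := by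
            refine Finset.sum_congr rfl fun j _ => ?_
            rw [← nuE_smul_rep A e N he a b hab r n j]
            exact (map_sum (tER A e M N (muE A e M (a j) m)) _ _).symm
  set ψ : TensA A M N →+ TensE A e M N := QuotientAddGroup.lift _ g hgker with hψ
  have hψmk : ∀ (p : M × N), ψ (QuotientAddGroup.mk (FreeAbelianGroup.of p)) = g0 p := by
    intro p
    exact (QuotientAddGroup.lift_mk' _ hgker _).trans (hgof p)
  -- Step 4: ψ ∘ φ = id on generators
  have left0 : ∀ (x : Msube A e M) (y : eSubN A e N),
      ψ (φ (QuotientAddGroup.mk (FreeAbelianGroup.of (x, y)))) =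
        QuotientAddGroup.mk (FreeAbelianGroup.of (x, y)) := by
    intro x y
    rw [hφmk]
    rw [show tA A M N (x : M) (y : N)
      = (QuotientAddGroup.mk (FreeAbelianGroup.of ((x : M), (y : N))) : TensA A M N)
      from rfl]
    rw [hψmk]
    have hmu : ∀ i, muE A e M (a i) (x : M) = rAct A e M (a i) x := by
      intro i
      apply Subtype.ext
      show MulOpposite.op (a i * e) • (x : M) = MulOpposite.op (e * a i * e) • (x : M)
      conv_lhs => rw [← Msube_smul_e A e M he x]
      rw [← mul_smul, ← MulOpposite.op_mul, mul_assoc]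
    have hnu : ∀ i, nuE A e N (b i) (y : N) = lAct A e N (b i) y := by
      intro i
      apply Subtype.ext
      show (e * b i) • (y : N) = (e * b i * e) • (y : N)
      conv_lhs => rw [← eSubN_smul_e A e N he y]
      rw [← mul_smul]
    show (∑ i, tE A e M N (muE A e M (a i) (x : M)) (nuE A e N (b i) (y : N)))
        = tE A e M N x y
    calc (∑ i, tE A e M N (muE A e M (a i) (x : M)) (nuE A e N (b i) (y : N)))
        = ∑ i, tE A e M N (rAct A e M (a i) x) (lAct A e N (b i) y) :=
          Finset.sum_congr rfl fun i _ => by rw [hmu, hnu]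
      _ = ∑ i, tE A e M N x (lAct A e N (a i) (lAct A e N (b i) y)) :=
          Finset.sum_congr rfl fun i _ => tE_balanced A e M N _ _ _
      _ = tE A e M N x (∑ i, lAct A e N (a i) (lAct A e N (b i) y)) :=
          (map_sum (tER A e M N x) _ _).symm
      _ = tE A e M N x y := by
          congr 1
          apply Subtype.ext
          rw [AddSubmonoidClass.coe_finset_sum]
          have h2 : ∀ i, ((lAct A e N (a i) (lAct A e N (b i) y) : eSubN A e N) : N)
              = (e * (a i * e * b i) * e) • (y : N) := by
            intro i
            show (e * a i * e) • (e * b i * e) • (y : N) = _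
            rw [← mul_smul]
            congr 1
            rw [show (e * a i * e) * (e * b i * e)
              = e * (a i * ((e * e) * b i)) * e by simp only [mul_assoc], he]
            simp only [mul_assoc]
          rw [Finset.sum_congr rfl fun i _ => h2 i, ← Finset.sum_smul, ← Finset.sum_mul,
            ← Finset.mul_sum, hab, mul_one]
          rw [show ((e * e) • (y : N)) = e • e • (y : N) from mul_smul e e (y : N),
            eSubN_smul_e A e N he y, eSubN_smul_e A e N he y]
  have left : Function.LeftInverse ψ φ := by
    have hcomp : (ψ.comp φ).comp (QuotientAddGroup.mk' (AddSubgroup.closure (tensRelE A e M N)))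
        = (AddMonoidHom.id (TensE A e M N)).comp
            (QuotientAddGroup.mk' (AddSubgroup.closure (tensRelE A e M N))) := by
      apply FreeAbelianGroup.lift_ext
      rintro ⟨x, y⟩
      exact left0 x y
    have : ψ.comp φ = AddMonoidHom.id (TensE A e M N) :=
      QuotientAddGroup.addMonoidHom_ext _ hcomp
    intro z
    calc ψ (φ z) = (ψ.comp φ) z := rfl
      _ = z := by rw [this]; rfl
  -- Step 5: φ ∘ ψ = id
  have right0 : ∀ (m : M) (n : N),
      φ (ψ (QuotientAddGroup.mk (FreeAbelianGroup.of (m, n)))) =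
        QuotientAddGroup.mk (FreeAbelianGroup.of (m, n)) := by
    intro m n
    rw [hψmk]
    show φ (∑ i, tE A e M N (muE A e M (a i) m) (nuE A e N (b i) n))
      = tA A M N m n
    rw [map_sum φ]
    calc (∑ i, φ (tE A e M N (muE A e M (a i) m) (nuE A e N (b i) n)))
        = ∑ i, tA A M N ((muE A e M (a i) m : M)) ((nuE A e N (b i) n : N)) :=
          Finset.sum_congr rfl fun i _ => hφmk _ _
      _ = ∑ i, tA A M N m ((a i * e * b i) • n) := by
          refine Finset.sum_congr rfl fun i _ => ?_
          show tA A M N (MulOpposite.op (a i * e) • m) ((e * b i) • n) = _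
          rw [tA_balanced, ← mul_smul, show (a i * e) * (e * b i)
            = a i * (e * e) * b i by simp only [mul_assoc], he]
      _ = tA A M N m ((∑ i, a i * e * b i) • n) := by
          rw [Finset.sum_smul]
          exact (map_sum (tAR A M N m) _ _).symm
      _ = tA A M N m n := by rw [hab, one_smul]
  have right : Function.RightInverse ψ φ := by
    have hcomp : (φ.comp ψ).comp (QuotientAddGroup.mk' (AddSubgroup.closure (tensRelA A M N)))
        = (AddMonoidHom.id (TensA A M N)).comp
            (QuotientAddGroup.mk' (AddSubgroup.closure (tensRelA A M N))) := by
      apply FreeAbelianGroup.lift_ext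
      rintro ⟨m, n⟩
      exact right0 m n
    have : φ.comp ψ = AddMonoidHom.id (TensA A M N) :=
      QuotientAddGroup.addMonoidHom_ext _ hcomp
    intro z
    calc φ (ψ z) = (φ.comp ψ) z := rfl
      _ = z := by rw [this]; rfl
  exact ⟨φ, fun m n => hφmk m n, Function.bijective_iff_has_inverse.mpr ⟨ψ, left, right⟩⟩

end
end

section
/- In a commutative ring R with a unit q and element X, define the matrices B = diag(−1, 1) and A(X) the 2×2 upper-triangular matrix with entries A₁₁ = −1, A₁₂ = (−1)^p q^{2p+4}(X^{−2p−3} − q^{−4}X^{−2p+1}), A₂₁ = 0, A₂₂ = q^{4p+2}X^{−4p−2} over ℂ[X^{±1}]. Then A(X)·B·A(q²X⁻¹) = B (where A(q²X⁻¹) is obtained by substituting X ↦ q²X⁻¹). -/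
noncomputable section

private lemma torusAux1 {F : Type*} [Field F] (q X : F) (hq : q ≠ 0) (hX : X ≠ 0) (p : ℕ) :
    (-1:F) ^ p * q ^ (2 * p + 4) *
        ((q ^ 2 * X⁻¹) ^ (-(2 * (p:ℤ)) - 3) - (q ^ (4:ℤ))⁻¹ * (q ^ 2 * X⁻¹) ^ (-(2 * (p:ℤ)) + 1)) +
      (-1:F) ^ p * q ^ (2 * p + 4) * (X ^ (-(2 * (p:ℤ)) - 3) - (q ^ (4:ℤ))⁻¹ * X ^ (-(2 * (p:ℤ)) + 1)) *
        (q ^ (4 * p + 2) * (q ^ 2 * X⁻¹) ^ (-(4 * (p:ℤ)) - 2)) = 0 := by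
  have hq2X : q ^ 2 * X⁻¹ ≠ 0 := mul_ne_zero (pow_ne_zero _ hq) (inv_ne_zero hX)
  have h4 : (q ^ (4:ℤ))⁻¹ = (q ^ (4:ℕ))⁻¹ := by norm_cast
  rw [h4]
  have e1 : ∀ y : F, y ^ (-(2 * (p : ℤ)) - 3) = (y ^ (2 * p + 3))⁻¹ := fun y => by
    rw [show -(2 * (p : ℤ)) - 3 = -((2 * p + 3 : ℕ) : ℤ) by push_cast; ring, zpow_neg,
      zpow_natCast]
  have e2 : ∀ y : F, y ≠ 0 → y ^ (-(2 * (p : ℤ)) + 1) = (y ^ (2 * p))⁻¹ * y := fun y hy => by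
    rw [show -(2 * (p : ℤ)) + 1 = -((2 * p : ℕ) : ℤ) + 1 by push_cast; ring,
      zpow_add₀ hy, zpow_neg, zpow_natCast, zpow_one]
  have e3 : ∀ y : F, y ^ (-(4 * (p : ℤ)) - 2) = (y ^ (4 * p + 2))⁻¹ := fun y => by
    rw [show -(4 * (p : ℤ)) - 2 = -((4 * p + 2 : ℕ) : ℤ) by push_cast; ring, zpow_neg,
      zpow_natCast]
  have hqu : q * q⁻¹ = 1 := mul_inv_cancel₀ hq
  have hXv : X * X⁻¹ = 1 := mul_inv_cancel₀ hX
  have hAB : q ^ p * q⁻¹ ^ p = 1 := by rw [← mul_pow, hqu, one_pow]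
  have hCD : X ^ p * X⁻¹ ^ p = 1 := by rw [← mul_pow, hXv, one_pow]
  rw [e1, e1, e2 X hX, e2 _ hq2X, e3]
  simp only [mul_pow, inv_pow, mul_inv, inv_inv]
  linear_combination (q⁻¹ ^ 2 * X ^ 3 * (q ^ p) ^ 2 * (q⁻¹ ^ p) ^ 4 * (X ^ p) ^ 2 * ((-1) ^ p) - q⁻¹ ^ 2 * X ^ 3 * (q ^ p) ^ 6 * (q⁻¹ ^ p) ^ 8 * (X ^ p) ^ 4 * (X⁻¹ ^ p) ^ 2 * ((-1) ^ p) + q * q⁻¹ ^ 3 * X ^ 3 * (q ^ p) ^ 2 * (q⁻¹ ^ p) ^ 4 * (X ^ p) ^ 2 * ((-1) ^ p) - q * q⁻¹ ^ 3 * X ^ 3 * (q ^ p) ^ 6 * (q⁻¹ ^ p) ^ 8 * (X ^ p) ^ 4 * (X⁻¹ ^ p) ^ 2 * ((-1) ^ p) - q ^ 2 * X⁻¹ * (q ^ p) ^ 2 * (q⁻¹ ^ p) ^ 4 * (X ^ p) ^ 2 * ((-1) ^ p) + q ^ 2 * X ^ 2 * X⁻¹ ^ 3 * (q ^ p) ^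 6 * (q⁻¹ ^ p) ^ 8 * (X ^ p) ^ 4 * (X⁻¹ ^ p) ^ 2 * ((-1) ^ p) + q ^ 2 * q⁻¹ ^ 4 * X ^ 3 * (q ^ p) ^ 2 * (q⁻¹ ^ p) ^ 4 * (X ^ p) ^ 2 * ((-1) ^ p) - q ^ 2 * q⁻¹ ^ 4 * X ^ 3 * (q ^ p) ^ 6 * (q⁻¹ ^ p) ^ 8 * (X ^ p) ^ 4 * (X⁻¹ ^ p) ^ 2 * ((-1) ^ p) - q ^ 3 * q⁻¹ * X⁻¹ * (q ^ p) ^ 2 * (q⁻¹ ^ p) ^ 4 * (X ^ p) ^ 2 * ((-1) ^ p) + q ^ 3 * q⁻¹ * X ^ 2 * X⁻¹ ^ 3 * (q ^ p) ^ 6 * (q⁻¹ ^ p) ^ 8 * (X ^ p) ^ 4 * (X⁻¹ ^ p) ^ 2 * ((-1) ^ p) + q ^ 3 * q⁻¹ ^ 5 * X ^ 3 * (q ^ p) ^ 2 * (q⁻¹ ^ p) ^ 4 * (X ^ p) ^ 2 * ((-1) ^ p) - q ^ 3 * q⁻¹ ^ 5 * X ^ 3 * (q ^ p) ^ 6 *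 (q⁻¹ ^ p) ^ 8 * (X ^ p) ^ 4 * (X⁻¹ ^ p) ^ 2 * ((-1) ^ p) - q ^ 4 * q⁻¹ ^ 2 * X⁻¹ * (q ^ p) ^ 2 * (q⁻¹ ^ p) ^ 4 * (X ^ p) ^ 2 * ((-1) ^ p) + q ^ 4 * q⁻¹ ^ 2 * X ^ 2 * X⁻¹ ^ 3 * (q ^ p) ^ 6 * (q⁻¹ ^ p) ^ 8 * (X ^ p) ^ 4 * (X⁻¹ ^ p) ^ 2 * ((-1) ^ p) - q ^ 4 * q⁻¹ ^ 6 * X ^ 3 * (q ^ p) ^ 6 * (q⁻¹ ^ p) ^ 8 * (X ^ p) ^ 4 * (X⁻¹ ^ p) ^ 2 * ((-1) ^ p) - q ^ 5 * q⁻¹ ^ 3 * X⁻¹ * (q ^ p) ^ 2 * (q⁻¹ ^ p) ^ 4 * (X ^ p) ^ 2 * ((-1) ^ p) + q ^ 5 * q⁻¹ ^ 3 * X ^ 2 * X⁻¹ ^ 3 * (q ^ p) ^ 6 * (q⁻¹ ^ p) ^ 8 * (X ^ p) ^ 4 * (X⁻¹ ^ p) ^ 2 * ((-1) ^ p) - q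 ^ 5 * q⁻¹ ^ 7 * X ^ 3 * (q ^ p) ^ 6 * (q⁻¹ ^ p) ^ 8 * (X ^ p) ^ 4 * (X⁻¹ ^ p) ^ 2 * ((-1) ^ p)) * hqu + (q ^ 2 * X⁻¹ * (q ^ p) ^ 6 * (q⁻¹ ^ p) ^ 8 * (X ^ p) ^ 4 * (X⁻¹ ^ p) ^ 2 * ((-1) ^ p) + q ^ 2 * X * X⁻¹ ^ 2 * (q ^ p) ^ 6 * (q⁻¹ ^ p) ^ 8 * (X ^ p) ^ 4 * (X⁻¹ ^ p) ^ 2 * ((-1) ^ p)) * hXv + (q⁻¹ ^ 2 * X ^ 3 * (q⁻¹ ^ p) ^ 2 * (X ^ p) ^ 2 * ((-1) ^ p) - q⁻¹ ^ 2 * X ^ 3 * (q⁻¹ ^ p) ^ 2 * (X ^ p) ^ 4 * (X⁻¹ ^ p) ^ 2 * ((-1) ^ p) + q⁻¹ ^ 2 * X ^ 3 * (q ^ p) * (q⁻¹ ^ p) ^ 3 * (X ^ p) ^ 2 * ((-1) ^ p) - q⁻¹ ^ 2 * X ^ 3 * (q ^ p) * (q⁻¹ ^ p) ^ 3 * (X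 ^ p) ^ 4 * (X⁻¹ ^ p) ^ 2 * ((-1) ^ p) - q⁻¹ ^ 2 * X ^ 3 * (q ^ p) ^ 2 * (q⁻¹ ^ p) ^ 4 * (X ^ p) ^ 4 * (X⁻¹ ^ p) ^ 2 * ((-1) ^ p) - q⁻¹ ^ 2 * X ^ 3 * (q ^ p) ^ 3 * (q⁻¹ ^ p) ^ 5 * (X ^ p) ^ 4 * (X⁻¹ ^ p) ^ 2 * ((-1) ^ p) - q⁻¹ ^ 2 * X ^ 3 * (q ^ p) ^ 4 * (q⁻¹ ^ p) ^ 6 * (X ^ p) ^ 4 * (X⁻¹ ^ p) ^ 2 * ((-1) ^ p) - q⁻¹ ^ 2 * X ^ 3 * (q ^ p) ^ 5 * (q⁻¹ ^ p) ^ 7 * (X ^ p) ^ 4 * (X⁻¹ ^ p) ^ 2 * ((-1) ^ p) - q ^ 2 * X⁻¹ * (q⁻¹ ^ p) ^ 2 * (X ^ p) ^ 2 * ((-1) ^ p) + q ^ 2 * X⁻¹ * (q⁻¹ ^ p) ^ 2 * (X ^ p) ^ 4 * (X⁻¹ ^ p) ^ 2 * ((-1) ^ p) - q ^ 2 * X⁻¹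 * (q ^ p) * (q⁻¹ ^ p) ^ 3 * (X ^ p) ^ 2 * ((-1) ^ p) + q ^ 2 * X⁻¹ * (q ^ p) * (q⁻¹ ^ p) ^ 3 * (X ^ p) ^ 4 * (X⁻¹ ^ p) ^ 2 * ((-1) ^ p) + q ^ 2 * X⁻¹ * (q ^ p) ^ 2 * (q⁻¹ ^ p) ^ 4 * (X ^ p) ^ 4 * (X⁻¹ ^ p) ^ 2 * ((-1) ^ p) + q ^ 2 * X⁻¹ * (q ^ p) ^ 3 * (q⁻¹ ^ p) ^ 5 * (X ^ p) ^ 4 * (X⁻¹ ^ p) ^ 2 * ((-1) ^ p) + q ^ 2 * X⁻¹ * (q ^ p) ^ 4 * (q⁻¹ ^ p) ^ 6 * (X ^ p) ^ 4 * (X⁻¹ ^ p) ^ 2 * ((-1) ^ p) + q ^ 2 * X⁻¹ * (q ^ p) ^ 5 * (q⁻¹ ^ p) ^ 7 * (X ^ p) ^ 4 * (X⁻¹ ^ p) ^ 2 * ((-1) ^ p)) * hAB + (-q⁻¹ ^ 2 * X ^ 3 * (q⁻¹ ^ p) ^ 2 * (X ^ p) ^ 2 * ((-1) ^ p) - q⁻¹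 ^ 2 * X ^ 3 * (q⁻¹ ^ p) ^ 2 * (X ^ p) ^ 3 * (X⁻¹ ^ p) * ((-1) ^ p) + q ^ 2 * X⁻¹ * (q⁻¹ ^ p) ^ 2 * (X ^ p) ^ 2 * ((-1) ^ p) + q ^ 2 * X⁻¹ * (q⁻¹ ^ p) ^ 2 * (X ^ p) ^ 3 * (X⁻¹ ^ p) * ((-1) ^ p)) * hCD

private lemma torusAux2 {F : Type*} [Field F] (q X : F) (hq : q ≠ 0) (hX : X ≠ 0) (p : ℕ) :
    q ^ (4 * p + 2) * X ^ (-(4 * (p:ℤ)) - 2) *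
      (q ^ (4 * p + 2) * (q ^ 2 * X⁻¹) ^ (-(4 * (p:ℤ)) - 2)) = 1 := by
  have e3 : ∀ y : F, y ^ (-(4 * (p : ℤ)) - 2) = (y ^ (4 * p + 2))⁻¹ := fun y => by
    rw [show -(4 * (p : ℤ)) - 2 = -((4 * p + 2 : ℕ) : ℤ) by push_cast; ring, zpow_neg,
      zpow_natCast]
  have hqu : q * q⁻¹ = 1 := mul_inv_cancel₀ hq
  have hXv : X * X⁻¹ = 1 := mul_inv_cancel₀ hX
  have hAB : q ^ p * q⁻¹ ^ p = 1 := by rw [← mul_pow, hqu, one_pow]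
  have hCD : X ^ p * X⁻¹ ^ p = 1 := by rw [← mul_pow, hXv, one_pow]
  rw [e3, e3]
  simp only [mul_pow, inv_pow, mul_inv, inv_inv]
  linear_combination (X ^ 2 * X⁻¹ ^ 2 * (q ^ p) ^ 8 * (q⁻¹ ^ p) ^ 8 * (X ^ p) ^ 4 * (X⁻¹ ^ p) ^ 4 + q * q⁻¹ * X ^ 2 * X⁻¹ ^ 2 * (q ^ p) ^ 8 * (q⁻¹ ^ p) ^ 8 * (X ^ p) ^ 4 * (X⁻¹ ^ p) ^ 4 + q ^ 2 * q⁻¹ ^ 2 * X ^ 2 * X⁻¹ ^ 2 * (q ^ p) ^ 8 * (q⁻¹ ^ p) ^ 8 * (X ^ p) ^ 4 * (X⁻¹ ^ p) ^ 4 + q ^ 3 * q⁻¹ ^ 3 * X ^ 2 * X⁻¹ ^ 2 * (q ^ p) ^ 8 * (q⁻¹ ^ p) ^ 8 * (X ^ p) ^ 4 * (X⁻¹ ^ p) ^ 4) * hqu + ((q ^ p) ^ 8 * (q⁻¹ ^ p) ^ 8 * (X ^ p) ^ 4 * (X⁻¹ ^ p) ^ 4 + X * X⁻¹ * (q ^ p)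 ^ 8 * (q⁻¹ ^ p) ^ 8 * (X ^ p) ^ 4 * (X⁻¹ ^ p) ^ 4) * hXv + ((X ^ p) ^ 4 * (X⁻¹ ^ p) ^ 4 + (q ^ p) * (q⁻¹ ^ p) * (X ^ p) ^ 4 * (X⁻¹ ^ p) ^ 4 + (q ^ p) ^ 2 * (q⁻¹ ^ p) ^ 2 * (X ^ p) ^ 4 * (X⁻¹ ^ p) ^ 4 + (q ^ p) ^ 3 * (q⁻¹ ^ p) ^ 3 * (X ^ p) ^ 4 * (X⁻¹ ^ p) ^ 4 + (q ^ p) ^ 4 * (q⁻¹ ^ p) ^ 4 * (X ^ p) ^ 4 * (X⁻¹ ^ p) ^ 4 + (q ^ p) ^ 5 * (q⁻¹ ^ p) ^ 5 * (X ^ p) ^ 4 * (X⁻¹ ^ p) ^ 4 + (q ^ p) ^ 6 * (q⁻¹ ^ p) ^ 6 * (X ^ p) ^ 4 * (X⁻¹ ^ p) ^ 4 + (q ^ p) ^ 7 * (q⁻¹ ^ p) ^ 7 * (X ^ p) ^ 4 * (X⁻¹ ^ p) ^ 4) * hAB + (1 + (X ^ p) * (X⁻¹ ^ p) + (X ^ p)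 ^ 2 * (X⁻¹ ^ p) ^ 2 + (X ^ p) ^ 3 * (X⁻¹ ^ p) ^ 3) * hCD

/-- The matrix `A(x)` defining the action of `Y` on the nonsymmetric skein module of the
`(2,2p+1)` torus knot complement: upper triangular with entries `A₁₁ = −1`,
`A₁₂ = (−1)^p q^{2p+4}(x^{−2p−3} − q^{−4}x^{−2p+1})`, `A₂₂ = q^{4p+2}x^{−4p−2}`. -/
def torusA {F : Type*} [Field F] (q : F) (p : ℕ) (x : F) : Matrix (Fin 2) (Fin 2) F :=
  !![-1, (-1) ^ p * q ^ (2 * p + 4) *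
        (x ^ (-(2 * (p : ℤ)) - 3) - q ^ (-4 : ℤ) * x ^ (-(2 * (p : ℤ)) + 1));
     0, q ^ (4 * p + 2) * x ^ (-(4 * (p : ℤ)) - 2)]

/-- The relation `A(X)·B·A(q²X⁻¹) = B` with `B = diag(−1, 1)`, verifying that the
operators define a module over `A_q ⋊ ℤ₂` for the `(2,2p+1)` torus knot. -/
theorem torusA_relation {F : Type*} [Field F] (q X : F) (hq : q ≠ 0) (hX : X ≠ 0)
    (p : ℕ) (hp : 1 ≤ p) :
    torusA q p X * !![(-1 : F), 0; 0, 1] * torusA q p (q ^ 2 * X⁻¹)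
      = !![(-1 : F), 0; 0, 1] := by
  unfold torusA
  rw [Matrix.mul_fin_two, Matrix.mul_fin_two]
  ext i j
  fin_cases i <;> fin_cases j <;> simp
  · have h4 : (q ^ (4:ℤ))⁻¹ = (q ^ (4:ℕ))⁻¹ := by norm_cast
    have := torusAux1 q X hq hX p
    simp only [h4] at this ⊢
    exact this
  · exact torusAux2 q X hq hX p

end
end

section
/- Define a, b, c ∈ ℂ(q)[X, X⁻¹] by a = −q⁻²X⁴ + q⁻²X² + q², b = −q⁻²X² + q²X⁻², c = q⁻²X³ − q²X⁻¹, and for f write f'(X) := f(q²X⁻¹). Then the following identities hold: b' = −b, c' = −q²X⁻²·c, a·a' − q⁴·b·b' = 1, and a'·c + q²·b'·c' + c' = 0. -/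
noncomputable section

/-- `a(x) = −q⁻²x⁴ + q⁻²x² + q²`. -/
def fig8a {F : Type*} [Field F] (q x : F) : F :=
  -q ^ (-2 : ℤ) * x ^ 4 + q ^ (-2 : ℤ) * x ^ 2 + q ^ 2

/-- `b(x) = −q⁻²x² + q²x⁻²`. -/
def fig8b {F : Type*} [Field F] (q x : F) : F :=
  -q ^ (-2 : ℤ) * x ^ 2 + q ^ 2 * x ^ (-2 : ℤ)

/-- `c(x) = q⁻²x³ − q²x⁻¹`. -/
def fig8c {F : Type*} [Field F] (q x : F) : F :=
  q ^ (-2 : ℤ) * x ^ 3 - q ^ 2 * x ^ (-1 : ℤ)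

/-- With `f'(X) := f(q²X⁻¹)`, the identities `b' = −b`, `c' = −q²X⁻²·c`,
`a·a' − q⁴·b·b' = 1`, and `a'·c + q²·b'·c' + c' = 0` hold in `ℂ(q)(X)`. -/
theorem fig8_identities {F : Type*} [Field F] (q X : F) (hq : q ≠ 0) (hX : X ≠ 0) :
    fig8b q (q ^ 2 * X⁻¹) = - fig8b q X ∧
    fig8c q (q ^ 2 * X⁻¹) = - q ^ 2 * X ^ (-2 : ℤ) * fig8c q X ∧
    fig8a q X * fig8a q (q ^ 2 * X⁻¹) - q ^ 4 * fig8b q X * fig8b q (q ^ 2 * X⁻¹) = 1 ∧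
    fig8a q (q ^ 2 * X⁻¹) * fig8c q X
      + q ^ 2 * fig8b q (q ^ 2 * X⁻¹) * fig8c q (q ^ 2 * X⁻¹)
      + fig8c q (q ^ 2 * X⁻¹) = 0 := by
  have hX2 : X ^ 2 ≠ 0 := pow_ne_zero _ hX
  have hX3 : X ^ 3 ≠ 0 := pow_ne_zero _ hX
  have hX4 : X ^ 4 ≠ 0 := pow_ne_zero _ hX
  have hq2 : q ^ 2 ≠ 0 := pow_ne_zero _ hq
  have ha : fig8a q X = (-X ^ 4 + X ^ 2 + q ^ 4) / q ^ 2 := by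
    simp only [fig8a, zpow_neg, zpow_ofNat]
    field_simp
  have ha' : fig8a q (q ^ 2 * X⁻¹) = (q ^ 2 * X ^ 4 + q ^ 2 * X ^ 2 - q ^ 6) / X ^ 4 := by
    simp only [fig8a, zpow_neg, zpow_ofNat]
    field_simp
    ring
  have hb : fig8b q X = (-X ^ 4 + q ^ 4) / (q ^ 2 * X ^ 2) := by
    simp only [fig8b, zpow_neg, zpow_ofNat]
    field_simp
  have hb' : fig8b q (q ^ 2 * X⁻¹) = (X ^ 4 - q ^ 4) / (q ^ 2 * X ^ 2) := by
    simp only [fig8b, zpow_neg, zpow_ofNat]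
    field_simp
    ring
  have hc : fig8c q X = (X ^ 4 - q ^ 4) / (q ^ 2 * X) := by
    simp only [fig8c, zpow_neg, zpow_ofNat, zpow_one]
    field_simp
  have hc' : fig8c q (q ^ 2 * X⁻¹) = (q ^ 4 - X ^ 4) / X ^ 3 := by
    simp only [fig8c, zpow_neg, zpow_ofNat, zpow_one]
    field_simp
  rw [ha, ha', hb, hb', hc, hc']
  simp only [zpow_neg, zpow_ofNat]
  refine ⟨?_, ?_, ?_, ?_⟩ <;> field_simp <;> ring

end
end

section
/- With a, b, c and f ↦ f' as above, let B = diag(−1, 1, 1) and A(X) the 3×3 upper-triangular matrix with first row (−1, c, q²c'), second row (0, a, q⁴b'), third row (0, b, a'). Then A(X)·B·A(q²X⁻¹) = B. -/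
noncomputable section

/-- The 3×3 matrix `A(x)` with rows `(−1, c, q²c')`, `(0, a, q⁴b')`, `(0, b, a')`,
where `f'(X) := f(q²X⁻¹)`. -/
def fig8A {F : Type*} [Field F] (q x : F) : Matrix (Fin 3) (Fin 3) F :=
  !![-1, fig8c q x, q ^ 2 * fig8c q (q ^ 2 * x⁻¹);
     0, fig8a q x, q ^ 4 * fig8b q (q ^ 2 * x⁻¹);
     0, fig8b q x, fig8a q (q ^ 2 * x⁻¹)]

set_option maxHeartbeats 4000000 in
/-- With `B = diag(−1, 1, 1)`: `A(X)·B·A(q²X⁻¹) = B`, verifying the `A_q ⋊ ℤ₂`-module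
structure on the nonsymmetric skein module of the figure eight knot complement. -/
theorem fig8A_relation {F : Type*} [Field F] (q X : F) (hq : q ≠ 0) (hX : X ≠ 0) :
    fig8A q X * !![(-1 : F), 0, 0; 0, 1, 0; 0, 0, 1] * fig8A q (q ^ 2 * X⁻¹)
      = !![(-1 : F), 0, 0; 0, 1, 0; 0, 0, 1] := by
  have hqu : q * q⁻¹ = 1 := mul_inv_cancel₀ hq
  have hXv : X * X⁻¹ = 1 := mul_inv_cancel₀ hX
  ext i j
  fin_cases i <;> fin_cases j <;>
    simp [fig8A, fig8a, fig8b, fig8c, Matrix.mul_apply, Fin.sum_univ_three,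
      zpow_neg, zpow_ofNat, mul_inv, inv_inv, ← inv_pow,
      Matrix.vecHead, Matrix.vecTail]
  · linear_combination ((-1) * X + X ^ 3 * X⁻¹ ^ 2 + (-1) * q * q⁻¹ * X + q * q⁻¹ * X ^ 3 * X⁻¹ ^ 2 + (-1) * q ^ 2 * q⁻¹ ^ 2 * X ^ 3 + q ^ 2 * q⁻¹ ^ 2 * X ^ 3 * X⁻¹ ^ 2 + (-1) * q ^ 3 * q⁻¹ ^ 3 * X ^ 3 + q ^ 3 * q⁻¹ ^ 3 * X ^ 3 * X⁻¹ ^ 2 + q ^ 4 * X * X⁻¹ ^ 2 + q ^ 4 * X ^ 2 * X⁻¹ ^ 3 + (-1) * q ^ 4 * X ^ 3 * X⁻¹ ^ 4 + (-1) * q ^ 4 * q⁻¹ ^ 4 * X ^ 3 + q ^ 5 * q⁻¹ * X * X⁻¹ ^ 2 + q ^ 5 * q⁻¹ * X ^ 2 * X⁻¹ ^ 3 + (-1) * q ^ 5 * q⁻¹ * X ^ 3 * X⁻¹ ^ 4 + (-1) * q ^ 5 * q⁻¹ ^ 5 * X ^ 3 + q ^ 6 * q⁻¹ ^ 2 * X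 * X⁻¹ ^ 2 + q ^ 6 * q⁻¹ ^ 2 * X ^ 2 * X⁻¹ ^ 3 + (-1) * q ^ 6 * q⁻¹ ^ 2 * X ^ 3 * X⁻¹ ^ 4 + q ^ 7 * q⁻¹ ^ 3 * X * X⁻¹ ^ 2 + q ^ 7 * q⁻¹ ^ 3 * X ^ 2 * X⁻¹ ^ 3 + (-1) * q ^ 7 * q⁻¹ ^ 3 * X ^ 3 * X⁻¹ ^ 4 + q ^ 8 * q⁻¹ ^ 4 * X ^ 2 * X⁻¹ ^ 3 + q ^ 9 * q⁻¹ ^ 5 * X ^ 2 * X⁻¹ ^ 3 + (-1) * q ^ 10 * q⁻¹ ^ 2 * X⁻¹ ^ 5 + (-1) * q ^ 11 * q⁻¹ ^ 3 * X⁻¹ ^ 5) * hqu + (X + X ^ 2 * X⁻¹ + q ^ 4 * X⁻¹ + (-1) * q ^ 4 * X ^ 2 * X⁻¹ ^ 3) * hXv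
  · linear_combination ((-1) * q ^ 4 * X⁻¹ + (-1) * q ^ 4 * X + q ^ 4 * X ^ 2 * X⁻¹ + q ^ 4 * X ^ 2 * X⁻¹ ^ 3 + q ^ 4 * X ^ 3 * X⁻¹ ^ 2 + (-1) * q ^ 4 * X ^ 4 * X⁻¹ ^ 3 + (-1) * q ^ 5 * q⁻¹ * X⁻¹ + (-1) * q ^ 5 * q⁻¹ * X + q ^ 5 * q⁻¹ * X ^ 2 * X⁻¹ + q ^ 5 * q⁻¹ * X ^ 2 * X⁻¹ ^ 3 + q ^ 5 * q⁻¹ * X ^ 3 * X⁻¹ ^ 2 + (-1) * q ^ 5 * q⁻¹ * X ^ 4 * X⁻¹ ^ 3 + q ^ 6 * q⁻¹ ^ 2 * X ^ 2 * X⁻¹ + q ^ 6 * q⁻¹ ^ 2 * X ^ 2 * X⁻¹ ^ 3 + q ^ 6 * q⁻¹ ^ 2 * X ^ 3 * X⁻¹ ^ 2 + (-1) * q ^ 6 * q⁻¹ ^ 2 * X ^ 4 * X⁻¹ ^ 3 + q ^ 7 * q⁻¹ ^ 3 * X ^ 2 * X⁻¹ + q ^ 7 * q⁻¹ ^ 3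 * X ^ 2 * X⁻¹ ^ 3 + q ^ 7 * q⁻¹ ^ 3 * X ^ 3 * X⁻¹ ^ 2 + (-1) * q ^ 7 * q⁻¹ ^ 3 * X ^ 4 * X⁻¹ ^ 3 + q ^ 8 * q⁻¹ ^ 4 * X ^ 2 * X⁻¹ + q ^ 8 * q⁻¹ ^ 4 * X ^ 2 * X⁻¹ ^ 3 + q ^ 8 * q⁻¹ ^ 4 * X ^ 3 * X⁻¹ ^ 2 + (-1) * q ^ 8 * q⁻¹ ^ 4 * X ^ 4 * X⁻¹ ^ 3 + q ^ 8 * q⁻¹ ^ 8 * X ^ 5 + q ^ 9 * q⁻¹ ^ 5 * X ^ 2 * X⁻¹ + q ^ 9 * q⁻¹ ^ 5 * X ^ 2 * X⁻¹ ^ 3 + q ^ 9 * q⁻¹ ^ 5 * X ^ 3 * X⁻¹ ^ 2 + (-1) * q ^ 9 * q⁻¹ ^ 5 * X ^ 4 * X⁻¹ ^ 3 + q ^ 9 * q⁻¹ ^ 9 * X ^ 5 + (-1) * q ^ 10 * q⁻¹ ^ 2 * X⁻¹ ^ 3 + q ^ 10 * q⁻¹ ^ 6 * X ^ 2 * X⁻¹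 ^ 3 + (-1) * q ^ 10 * q⁻¹ ^ 6 * X ^ 4 * X⁻¹ ^ 3 + q ^ 10 * q⁻¹ ^ 10 * X ^ 5 + (-1) * q ^ 11 * q⁻¹ ^ 3 * X⁻¹ ^ 3 + q ^ 11 * q⁻¹ ^ 7 * X ^ 2 * X⁻¹ ^ 3 + (-1) * q ^ 11 * q⁻¹ ^ 7 * X ^ 4 * X⁻¹ ^ 3 + q ^ 11 * q⁻¹ ^ 11 * X ^ 5 + (-1) * q ^ 12 * q⁻¹ ^ 8 * X ^ 4 * X⁻¹ ^ 3 + (-1) * q ^ 13 * q⁻¹ ^ 9 * X ^ 4 * X⁻¹ ^ 3 + (-1) * q ^ 14 * q⁻¹ ^ 10 * X ^ 4 * X⁻¹ ^ 3 + (-1) * q ^ 15 * q⁻¹ ^ 11 * X ^ 4 * X⁻¹ ^ 3) * hqu + (q ^ 4 * X⁻¹ + q ^ 4 * X + q ^ 4 * X * X⁻¹ ^ 2 + (-1) * q ^ 4 * X ^ 3 * X⁻¹ ^ 2) * hXv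
  · linear_combination (X ^ 2 + X ^ 2 * X⁻¹ ^ 2 + (-1) * X ^ 4 * X⁻¹ ^ 2 + q * q⁻¹ * X ^ 2 + q * q⁻¹ * X ^ 2 * X⁻¹ ^ 2 + (-1) * q * q⁻¹ * X ^ 4 * X⁻¹ ^ 2 + q ^ 2 * q⁻¹ ^ 2 * X ^ 2 * X⁻¹ ^ 2 + q ^ 2 * q⁻¹ ^ 2 * X ^ 4 + (-1) * q ^ 2 * q⁻¹ ^ 2 * X ^ 4 * X⁻¹ ^ 2 + q ^ 3 * q⁻¹ ^ 3 * X ^ 2 * X⁻¹ ^ 2 + q ^ 3 * q⁻¹ ^ 3 * X ^ 4 + (-1) * q ^ 3 * q⁻¹ ^ 3 * X ^ 4 * X⁻¹ ^ 2 + q ^ 4 * X⁻¹ ^ 2 + (-2) * q ^ 4 * X ^ 2 * X⁻¹ ^ 2 + (-1) * q ^ 4 * X ^ 2 * X⁻¹ ^ 4 + q ^ 4 * X ^ 4 * X⁻¹ ^ 4 + q ^ 4 * q⁻¹ ^ 4 * X ^ 4 + q ^ 5 * q⁻¹ * X⁻¹ ^ 2 + (-2) * q ^ 5 * q⁻¹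 * X ^ 2 * X⁻¹ ^ 2 + (-1) * q ^ 5 * q⁻¹ * X ^ 2 * X⁻¹ ^ 4 + q ^ 5 * q⁻¹ * X ^ 4 * X⁻¹ ^ 4 + q ^ 5 * q⁻¹ ^ 5 * X ^ 4 + (-2) * q ^ 6 * q⁻¹ ^ 2 * X ^ 2 * X⁻¹ ^ 2 + (-1) * q ^ 6 * q⁻¹ ^ 2 * X ^ 2 * X⁻¹ ^ 4 + q ^ 6 * q⁻¹ ^ 2 * X ^ 4 * X⁻¹ ^ 4 + q ^ 6 * q⁻¹ ^ 6 * X ^ 4 + (-2) * q ^ 7 * q⁻¹ ^ 3 * X ^ 2 * X⁻¹ ^ 2 + (-1) * q ^ 7 * q⁻¹ ^ 3 * X ^ 2 * X⁻¹ ^ 4 + q ^ 7 * q⁻¹ ^ 3 * X ^ 4 * X⁻¹ ^ 4 + q ^ 7 * q⁻¹ ^ 7 * X ^ 4 + (-2) * q ^ 8 * q⁻¹ ^ 4 * X ^ 2 * X⁻¹ ^ 2 + (-2) * q ^ 9 * q⁻¹ ^ 5 * X ^ 2 * X⁻¹ ^ 2 + q ^ 10 * q⁻¹ ^ 2 * X⁻¹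 ^ 4 + q ^ 11 * q⁻¹ ^ 3 * X⁻¹ ^ 4) * hqu + ((1) + X * X⁻¹ + (-1) * X ^ 2 + (-1) * X ^ 3 * X⁻¹ + (-1) * q ^ 4 + (-1) * q ^ 4 * X⁻¹ ^ 2 + (-1) * q ^ 4 * X * X⁻¹ + (-1) * q ^ 4 * X * X⁻¹ ^ 3 + q ^ 4 * X ^ 2 * X⁻¹ ^ 2 + q ^ 4 * X ^ 3 * X⁻¹ ^ 3) * hXv
  · linear_combination ((-1) * q ^ 8 * q⁻¹ ^ 4 * X ^ 2 + q ^ 8 * q⁻¹ ^ 8 * X ^ 4 + (-1) * q ^ 8 * q⁻¹ ^ 8 * X ^ 6 + (-1) * q ^ 9 * q⁻¹ ^ 5 * X ^ 2 + q ^ 9 * q⁻¹ ^ 9 * X ^ 4 + (-1) * q ^ 9 * q⁻¹ ^ 9 * X ^ 6 + q ^ 10 * q⁻¹ ^ 2 * X⁻¹ ^ 2 + (-1) * q ^ 10 * q⁻¹ ^ 6 * X ^ 2 * X⁻¹ ^ 2 + q ^ 10 * q⁻¹ ^ 6 * X ^ 4 * X⁻¹ ^ 2 + (-1) * q ^ 10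 * q⁻¹ ^ 10 * X ^ 6 + q ^ 11 * q⁻¹ ^ 3 * X⁻¹ ^ 2 + (-1) * q ^ 11 * q⁻¹ ^ 7 * X ^ 2 * X⁻¹ ^ 2 + q ^ 11 * q⁻¹ ^ 7 * X ^ 4 * X⁻¹ ^ 2 + (-1) * q ^ 11 * q⁻¹ ^ 11 * X ^ 6 + q ^ 12 * q⁻¹ ^ 8 * X ^ 4 * X⁻¹ ^ 2 + (-1) * q ^ 12 * q⁻¹ ^ 12 * X ^ 6 + q ^ 13 * q⁻¹ ^ 9 * X ^ 4 * X⁻¹ ^ 2 + (-1) * q ^ 13 * q⁻¹ ^ 13 * X ^ 6 + q ^ 14 * q⁻¹ ^ 10 * X ^ 4 * X⁻¹ ^ 2 + q ^ 15 * q⁻¹ ^ 11 * X ^ 4 * X⁻¹ ^ 2) * hqu + (0) * hXv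
  · linear_combination (q ^ 2 * q⁻¹ ^ 2 * X ^ 2 + q ^ 3 * q⁻¹ ^ 3 * X ^ 2 + (-1) * q ^ 4 * X⁻¹ ^ 2 + q ^ 4 * q⁻¹ ^ 4 * X ^ 2 * X⁻¹ ^ 2 + (-1) * q ^ 5 * q⁻¹ * X⁻¹ ^ 2 + q ^ 5 * q⁻¹ ^ 5 * X ^ 2 * X⁻¹ ^ 2 + (-1) * q ^ 6 * q⁻¹ ^ 2 * X⁻¹ ^ 4 + (-1) * q ^ 7 * q⁻¹ ^ 3 * X⁻¹ ^ 4 + (-1) * q ^ 8 * q⁻¹ ^ 4 * X ^ 2 * X⁻¹ ^ 4 + (-1) * q ^ 9 * q⁻¹ ^ 5 * X ^ 2 * X⁻¹ ^ 4 + q ^ 10 * q⁻¹ ^ 2 * X⁻¹ ^ 6 + q ^ 11 * q⁻¹ ^ 3 * X⁻¹ ^ 6) * hqu + (0) * hXv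
  · linear_combination (X ^ 2 + X ^ 2 * X⁻¹ ^ 2 + (-1) * X ^ 4 * X⁻¹ ^ 2 + q * q⁻¹ * X ^ 2 + q * q⁻¹ * X ^ 2 * X⁻¹ ^ 2 + (-1) * q * q⁻¹ * X ^ 4 * X⁻¹ ^ 2 + q ^ 2 * q⁻¹ ^ 2 * X ^ 2 + q ^ 2 * q⁻¹ ^ 2 * X ^ 2 * X⁻¹ ^ 2 + (-1) * q ^ 2 * q⁻¹ ^ 2 * X ^ 4 * X⁻¹ ^ 2 + q ^ 3 * q⁻¹ ^ 3 * X ^ 2 + q ^ 3 * q⁻¹ ^ 3 * X ^ 2 * X⁻¹ ^ 2 + (-1) * q ^ 3 * q⁻¹ ^ 3 * X ^ 4 * X⁻¹ ^ 2 + q ^ 4 * X⁻¹ ^ 2 + (-2) * q ^ 4 * X ^ 2 * X⁻¹ ^ 2 + (-1) * q ^ 4 * X ^ 2 * X⁻¹ ^ 4 + q ^ 4 * X ^ 4 * X⁻¹ ^ 4 + q ^ 4 * q⁻¹ ^ 4 * X ^ 2 + q ^ 4 * q⁻¹ ^ 4 * X ^ 2 * X⁻¹ ^ 2 + (-1) *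 q ^ 4 * q⁻¹ ^ 4 * X ^ 4 * X⁻¹ ^ 2 + q ^ 5 * q⁻¹ * X⁻¹ ^ 2 + (-2) * q ^ 5 * q⁻¹ * X ^ 2 * X⁻¹ ^ 2 + (-1) * q ^ 5 * q⁻¹ * X ^ 2 * X⁻¹ ^ 4 + q ^ 5 * q⁻¹ * X ^ 4 * X⁻¹ ^ 4 + q ^ 5 * q⁻¹ ^ 5 * X ^ 2 + q ^ 5 * q⁻¹ ^ 5 * X ^ 2 * X⁻¹ ^ 2 + (-1) * q ^ 5 * q⁻¹ ^ 5 * X ^ 4 * X⁻¹ ^ 2 + (-2) * q ^ 6 * q⁻¹ ^ 2 * X ^ 2 * X⁻¹ ^ 2 + (-1) * q ^ 6 * q⁻¹ ^ 2 * X ^ 2 * X⁻¹ ^ 4 + q ^ 6 * q⁻¹ ^ 2 * X ^ 4 * X⁻¹ ^ 4 + q ^ 6 * q⁻¹ ^ 6 * X ^ 2 * X⁻¹ ^ 2 + (-1) * q ^ 6 * q⁻¹ ^ 6 * X ^ 4 * X⁻¹ ^ 2 + (-2) * q ^ 7 * q⁻¹ ^ 3 * X ^ 2 * X⁻¹ ^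 2 + (-1) * q ^ 7 * q⁻¹ ^ 3 * X ^ 2 * X⁻¹ ^ 4 + q ^ 7 * q⁻¹ ^ 3 * X ^ 4 * X⁻¹ ^ 4 + q ^ 7 * q⁻¹ ^ 7 * X ^ 2 * X⁻¹ ^ 2 + (-1) * q ^ 7 * q⁻¹ ^ 7 * X ^ 4 * X⁻¹ ^ 2 + (-2) * q ^ 8 * q⁻¹ ^ 4 * X ^ 2 * X⁻¹ ^ 2 + (-1) * q ^ 8 * q⁻¹ ^ 4 * X ^ 2 * X⁻¹ ^ 4 + q ^ 8 * q⁻¹ ^ 4 * X ^ 4 * X⁻¹ ^ 4 + (-1) * q ^ 8 * q⁻¹ ^ 8 * X ^ 4 + (-1) * q ^ 8 * q⁻¹ ^ 8 * X ^ 4 * X⁻¹ ^ 2 + (-2) * q ^ 9 * q⁻¹ ^ 5 * X ^ 2 * X⁻¹ ^ 2 + (-1) * q ^ 9 * q⁻¹ ^ 5 * X ^ 2 * X⁻¹ ^ 4 + q ^ 9 * q⁻¹ ^ 5 * X ^ 4 * X⁻¹ ^ 4 + (-1) * q ^ 9 * q⁻¹ ^ 9 * X ^ 4 + (-1) * q ^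 9 * q⁻¹ ^ 9 * X ^ 4 * X⁻¹ ^ 2 + q ^ 10 * q⁻¹ ^ 2 * X⁻¹ ^ 4 + (-1) * q ^ 10 * q⁻¹ ^ 6 * X ^ 2 * X⁻¹ ^ 4 + q ^ 10 * q⁻¹ ^ 6 * X ^ 4 * X⁻¹ ^ 4 + (-1) * q ^ 10 * q⁻¹ ^ 10 * X ^ 4 * X⁻¹ ^ 2 + q ^ 11 * q⁻¹ ^ 3 * X⁻¹ ^ 4 + (-1) * q ^ 11 * q⁻¹ ^ 7 * X ^ 2 * X⁻¹ ^ 4 + q ^ 11 * q⁻¹ ^ 7 * X ^ 4 * X⁻¹ ^ 4 + (-1) * q ^ 11 * q⁻¹ ^ 11 * X ^ 4 * X⁻¹ ^ 2 + q ^ 12 * q⁻¹ ^ 8 * X ^ 4 * X⁻¹ ^ 4 + q ^ 13 * q⁻¹ ^ 9 * X ^ 4 * X⁻¹ ^ 4 + q ^ 14 * q⁻¹ ^ 10 * X ^ 4 * X⁻¹ ^ 4 + q ^ 15 * q⁻¹ ^ 11 * X ^ 4 * X⁻¹ ^ 4) * hqu + ((1) + X * X⁻¹ + (-1) * X ^ 2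 + (-1) * X ^ 3 * X⁻¹ + (-1) * q ^ 4 + (-1) * q ^ 4 * X⁻¹ ^ 2 + (-1) * q ^ 4 * X * X⁻¹ + (-1) * q ^ 4 * X * X⁻¹ ^ 3 + q ^ 4 * X ^ 2 * X⁻¹ ^ 2 + q ^ 4 * X ^ 3 * X⁻¹ ^ 3) * hXv

end
end

section
/- Let q be transcendental over ℚ (or not a root of unity). Define an action of operators on M = ℂ(q)[X,X⁻¹] ⊕ ℂ(q)[X,X⁻¹] (basis u, v) by: X acts by multiplication; Y·u = −u, Y·v = (q²X⁻¹ − q⁶X⁻⁵)u + q⁶X⁻⁶·v extended by Y·(f(X)m) = f(q⁻²X)·(Y·m); s·u = −u with s·(f(X)u) = f(X⁻¹)·(s·u), and s·v = v with s·(f(X)v) = f(X⁻¹)·v. Then the short exact sequence 0 → ℂ(q)[X,X⁻¹]u → M → M/ℂ(q)[X,X⁻¹]u → 0 of modules over the algebra generated by X^{±1}, Y^{±1}, s does not split: there is no m = v + f(X)u in M with (q⁶X⁻⁶ − Y)·m = 0. -/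
open LaurentPolynomial

noncomputable section

/-- The field `ℂ(q)` with `q` a formal parameter (in particular, not a root of unity). -/
abbrev Kq : Type := RatFunc ℂ

/-- The transcendental parameter `q`. -/
def qq : Kq := RatFunc.X

/-- Substitution `X ↦ c·X` on Laurent polynomials over `ℂ(q)`. -/
def substScale (c : Kq) (f : LaurentPolynomial Kq) : LaurentPolynomial Kq :=
  Finsupp.sum (AddMonoidAlgebra.coeff f) (fun n a => C (a * c ^ n) * T n)

/-- Substitution `X ↦ X⁻¹` on Laurent polynomials over `ℂ(q)`. -/
def substInv (f : LaurentPolynomial Kq) : LaurentPolynomial Kq :=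
  Finsupp.sum (AddMonoidAlgebra.coeff f) (fun n a => C a * T (-n))

/-- The nonsymmetric skein module of the trefoil complement:
`M = ℂ(q)[X,X⁻¹]·u ⊕ ℂ(q)[X,X⁻¹]·v`, recorded as pairs `(f, g)` with `m = f·u + g·v`. -/
abbrev TrefoilM : Type := LaurentPolynomial Kq × LaurentPolynomial Kq

/-- The action of `Y`: `Y·u = −u`, `Y·v = (q²X⁻¹ − q⁶X⁻⁵)u + q⁶X⁻⁶·v`, extended by
`Y·(f(X)·m) = f(q⁻²X)·(Y·m)`. -/
def trefoilY (m : TrefoilM) : TrefoilM :=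
  (- substScale (qq ^ (-2 : ℤ)) m.1
      + (C (qq ^ 2) * T (-1) - C (qq ^ 6) * T (-5)) * substScale (qq ^ (-2 : ℤ)) m.2,
    C (qq ^ 6) * T (-6) * substScale (qq ^ (-2 : ℤ)) m.2)

/-- The action of `s`: `s·u = −u`, `s·v = v`, extended by `s·(f(X)·m) = f(X⁻¹)·(s·m)`. -/
def trefoilS (m : TrefoilM) : TrefoilM :=
  (- substInv m.1, substInv m.2)

lemma substScale_apply (c : Kq) (f : LaurentPolynomial Kq) (m : ℤ) :
    (substScale c f).coeff m = f.coeff m * c ^ m := by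
  classical
  unfold substScale
  simp only [← single_eq_C_mul_T]
  rw [AddMonoidAlgebra.coeff_finsuppSum, Finsupp.sum_apply]
  rw [Finsupp.sum]
  simp only [AddMonoidAlgebra.coeff_single, Finsupp.single_apply]
  by_cases h : m ∈ f.coeff.support
  · rw [Finset.sum_eq_single m]
    · simp
    · intro b _ hb; simp [hb]
    · intro h'; exact absurd h h'
  · have h0 : f.coeff m = 0 := Finsupp.notMem_support_iff.mp h
    rw [h0, zero_mul, Finset.sum_eq_zero]
    intro b hb
    have : b ≠ m := by rintro rfl; exact h hb
    simp [this]

lemma CT_mul_apply (c : Kq) (k : ℤ) (f : LaurentPolynomial Kq) (m : ℤ) :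
    (C c * T k * f : LaurentPolynomial Kq).coeff m = c * f.coeff (m - k) := by
  rw [← single_eq_C_mul_T, AddMonoidAlgebra.coeff_single_mul_apply]
  ring_nf

lemma substScale_one (c : Kq) : substScale c 1 = 1 := by
  unfold substScale
  rw [AddMonoidAlgebra.one_def, AddMonoidAlgebra.coeff_single, Finsupp.sum_single_index] <;> simp

lemma qq_ne_zero : qq ≠ 0 := RatFunc.X_ne_zero

/-- The short exact sequence `0 → ℂ(q)[X,X⁻¹]u → M → M/ℂ(q)[X,X⁻¹]u → 0` of the trefoil
skein module does not split: there is no `m = v + f(X)·u ∈ M` with `(q⁶X⁻⁶ − Y)·m = 0`. -/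
theorem trefoil_sequence_nonsplit :
    ¬ ∃ f : LaurentPolynomial Kq,
      (C (qq ^ 6) * T (-6) * f, C (qq ^ 6) * T (-6) * 1) = trefoilY (f, 1) := by
  classical
  rintro ⟨f, h⟩
  have h1 : C (qq ^ 6) * T (-6) * f
      = - substScale (qq ^ (-2 : ℤ)) f
        + (C (qq ^ 2) * T (-1) - C (qq ^ 6) * T (-5)) := by
    have := congrArg Prod.fst h
    simpa [trefoilY, substScale_one] using this
  set c : Kq := qq ^ (-2 : ℤ) with hc
  have key : ∀ m : ℤ, qq ^ 6 * f.coeff (m + 6)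
      = -(f.coeff m * c ^ m)
        + ((if (-1 : ℤ) = m then qq ^ 2 else 0) - (if (-5 : ℤ) = m then qq ^ 6 else 0)) := by
    intro m
    have hm := congrArg (fun p : LaurentPolynomial Kq => p.coeff m) h1
    rw [CT_mul_apply] at hm
    rw [AddMonoidAlgebra.coeff_add, AddMonoidAlgebra.coeff_neg, AddMonoidAlgebra.coeff_sub, Finsupp.add_apply, Finsupp.neg_apply, Finsupp.sub_apply, substScale_apply] at hm
    simp only [← single_eq_C_mul_T, AddMonoidAlgebra.coeff_single, Finsupp.single_apply] at hm
    simpa using hm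
  have hq6 : (qq : Kq) ^ 6 ≠ 0 := pow_ne_zero _ qq_ne_zero
  have hcz : c ≠ 0 := zpow_ne_zero _ qq_ne_zero
  by_cases hf : f = 0
  · have := key (-1)
    simp [hf] at this
    exact pow_ne_zero 2 qq_ne_zero this.symm
  · have hne : f.coeff.support.Nonempty := Finsupp.support_nonempty_iff.mpr (by simpa using hf)
    set N := f.coeff.support.max' hne with hN
    set n := f.coeff.support.min' hne with hn
    have hNmem : N ∈ f.coeff.support := f.coeff.support.max'_mem hne
    have hnmem : n ∈ f.coeff.support := f.coeff.support.min'_mem hne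
    have hfN : f.coeff N ≠ 0 := Finsupp.mem_support_iff.mp hNmem
    have hfn : f.coeff n ≠ 0 := Finsupp.mem_support_iff.mp hnmem
    have hN6 : f.coeff (N + 6) = 0 := by
      by_contra h'
      have : N + 6 ≤ N := f.coeff.support.le_max' _ (Finsupp.mem_support_iff.mpr h')
      omega
    have hkeyN := key N
    rw [hN6, mul_zero] at hkeyN
    have hNle : N ≤ -1 := by
      by_contra hNle
      have h1' : (-1 : ℤ) ≠ N := by omega
      have h5' : (-5 : ℤ) ≠ N := by omega
      rw [if_neg h1', if_neg h5'] at hkeyN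
      simp at hkeyN
      rcases hkeyN with hkeyN | hkeyN
      · exact hfN hkeyN
      · exact zpow_ne_zero N hcz hkeyN
    have hn6 : f.coeff (n - 6) = 0 := by
      by_contra h'
      have : n ≤ n - 6 := f.coeff.support.min'_le _ (Finsupp.mem_support_iff.mpr h')
      omega
    have hkeyn := key (n - 6)
    rw [hn6, show n - 6 + 6 = n by ring] at hkeyn
    have hnge : 1 ≤ n := by
      by_contra hnge
      have h1' : (-1 : ℤ) ≠ n - 6 := by omega
      have h5' : (-5 : ℤ) ≠ n - 6 := by omega
      rw [if_neg h1', if_neg h5'] at hkeyn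
      simp at hkeyn
      rcases hkeyn with hkeyn | hkeyn
      · exact qq_ne_zero hkeyn
      · exact hfn hkeyn
    have : n ≤ N := f.coeff.support.min'_le _ hNmem
    omega

end
end

section
/- Suppose a knot's colored Jones polynomials J(n) ∈ ℂ[q, q⁻¹] (extended to all n ∈ ℤ by J(−n) = −J(n)) admit Habiro's cyclotomic expansion J(n) = Σ_{k=0}^{∞} ((q^{2n} − q^{−2n})/(q² − q⁻²))·c_{n,k}·H_k with H_k ∈ ℤ[q, q⁻¹] independent of n and c_{n,k} := ∏_{i=1}^{k}(q^{4n} + q^{−4n} − q^{4i} − q^{−4i}). Then for all integers n, j, the rational function (q² − 1)·(J(n+j) + J(n−j−1))/(q^{4n−2} − 1) lies in ℂ[q, q⁻¹]. -/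
open LaurentPolynomial

/-- `c_{n,k} = ∏_{i=1}^{k} (q^{4n} + q^{−4n} − q^{4i} − q^{−4i})` in `ℂ[q,q⁻¹]`. -/
noncomputable def habiroC (m : ℤ) (k : ℕ) : LaurentPolynomial ℂ :=
  ∏ i ∈ Finset.range k,
    (T (4 * m) + T (-(4 * m)) - T (4 * ((i : ℤ) + 1)) - T (-(4 * ((i : ℤ) + 1))))

/-- Coefficientwise inclusion `ℤ[q,q⁻¹] → ℂ[q,q⁻¹]`. -/
noncomputable def laurentIntToComplex (f : LaurentPolynomial ℤ) : LaurentPolynomial ℂ :=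
  AddMonoidAlgebra.ofCoeff (Finsupp.mapRange (fun z : ℤ => (z : ℂ)) (by simp) f.coeff)

/-- `(q²+1) ∣ q^{2m}+1` for odd `m`. -/
lemma Tdvd_aux : ∀ k : ℕ, Odd k → (T 2 + 1 : LaurentPolynomial ℂ) ∣ T (2 * (k : ℤ)) + 1 := by
  intro k hk
  have h1 : (T (2 * (k : ℤ)) : LaurentPolynomial ℂ) = T 2 ^ k := by
    rw [T_pow]; congr 1; ring
  have h2 := sub_dvd_pow_sub_pow (T 2 : LaurentPolynomial ℂ) (-1) k
  rw [hk.neg_one_pow] at h2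
  simpa [h1, sub_neg_eq_add] using h2

lemma Tdvd (m : ℤ) (hm : Odd m) : (T 2 + 1 : LaurentPolynomial ℂ) ∣ T (2 * m) + 1 := by
  rcases le_or_gt 0 m with hpos | hneg
  · lift m to ℕ using hpos
    exact Tdvd_aux m (by exact_mod_cast hm)
  · have hp : Odd ((-m).toNat) := by
      have h2 : (((-m).toNat : ℤ)) = -m := Int.toNat_of_nonneg (by omega)
      rw [← Int.odd_coe_nat, h2]; exact hm.neg
    have hd := Tdvd_aux _ hp
    rw [show (2 * (((-m).toNat : ℤ))) = -(2 * m) by omega] at hd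
    have heq : (T (2 * m) : LaurentPolynomial ℂ) * (T (-(2 * m)) + 1) = T (2 * m) + 1 := by
      rw [mul_add, mul_one, ← T_add, show 2 * m + -(2 * m) = 0 from by ring, T_zero, add_comm]
    exact heq ▸ hd.mul_left (T (2 * m))

lemma prod_sub_dvd {R : Type*} [CommRing R] (x y : R) (t : ℕ → R) (k : ℕ) :
    (x - y) ∣ (∏ i ∈ Finset.range k, (x - t i)) - ∏ i ∈ Finset.range k, (y - t i) := by
  induction k with
  | zero => simp
  | succ k ih =>
    obtain ⟨c, hc⟩ := ih
    rw [Finset.prod_range_succ, Finset.prod_range_succ]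
    exact ⟨c * (x - t k) + ∏ i ∈ Finset.range k, (y - t i),
      by linear_combination (x - t k) * hc⟩

lemma habiroC_eq_zero {m : ℤ} {k : ℕ} (hm : m ≠ 0) (hk : m.natAbs ≤ k) : habiroC m k = 0 := by
  have h0 : 1 ≤ m.natAbs := Int.natAbs_pos.2 hm
  apply Finset.prod_eq_zero (i := m.natAbs - 1) (Finset.mem_range.2 (by omega))
  have h1 : ((m.natAbs - 1 : ℕ) : ℤ) + 1 = (m.natAbs : ℤ) := by omega
  rw [h1]
  rcases Int.natAbs_eq m with h | h
  · rw [← h]; ring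
  · rw [show ((m.natAbs : ℤ)) = -m by omega]
    simp only [mul_neg, neg_neg]
    ring

/-- If the colored Jones polynomials `J(n) ∈ ℂ[q,q⁻¹]` of a knot (extended to `n ∈ ℤ` by
`J(−n) = −J(n)`) admit Habiro's cyclotomic expansion
`J(n) = Σ_k ((q^{2n} − q^{−2n})/(q² − q⁻²))·c_{n,k}·H_k` with `H_k ∈ ℤ[q,q⁻¹]`
independent of `n` (the sum being finite since `c_{n,k} = 0` for `k ≥ |n|`), then for all
integers `n, j` the rational function `(q² − 1)(J(n+j) + J(n−j−1))/(q^{4n−2} − 1)` is a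
Laurent polynomial, i.e. `(q^{4n−2} − 1) ∣ (q² − 1)(J(n+j) + J(n−j−1))` in `ℂ[q,q⁻¹]`. -/
theorem habiro_implies_divisibility (J : ℤ → LaurentPolynomial ℂ)
    (H : ℕ → LaurentPolynomial ℤ)
    (hodd : ∀ n : ℤ, J (-n) = - J n)
    (hhabiro : ∀ n : ℤ,
      (T 2 - T (-2)) * J n
        = (T (2 * n) - T (-(2 * n))) *
            ∑ k ∈ Finset.range n.natAbs, habiroC n k * laurentIntToComplex (H k)) :
    ∀ n j : ℤ,
      (T (4 * n - 2) - 1 : LaurentPolynomial ℂ) ∣ (T 2 - 1) * (J (n + j) + J (n - j - 1)) := by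
  intro n j
  set a : ℤ := n + j with ha
  set b : ℤ := n - j - 1 with hb
  set N : ℕ := max a.natAbs b.natAbs with hN
  -- extend the sums to a common range
  have hext : ∀ m : ℤ, m.natAbs ≤ N →
      (T (2 * m) - T (-(2 * m))) * ∑ k ∈ Finset.range m.natAbs,
          habiroC m k * laurentIntToComplex (H k)
        = (T (2 * m) - T (-(2 * m))) * ∑ k ∈ Finset.range N,
          habiroC m k * laurentIntToComplex (H k) := by
    intro m hle
    by_cases hm : m = 0
    · subst hm; simp
    · congr 1
      refine Finset.sum_subset (Finset.range_subset_range.mpr hle) (fun k _ hk => ?_)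
      have : m.natAbs ≤ k := by simp [Finset.mem_range] at hk; omega
      rw [habiroC_eq_zero hm this, zero_mul]
  set Sa : LaurentPolynomial ℂ :=
    ∑ k ∈ Finset.range N, habiroC a k * laurentIntToComplex (H k) with hSa
  set Sb : LaurentPolynomial ℂ :=
    ∑ k ∈ Finset.range N, habiroC b k * laurentIntToComplex (H k) with hSb
  have hJa : (T 2 - T (-2)) * J a = (T (2 * a) - T (-(2 * a))) * Sa :=
    (hhabiro a).trans (hext a (le_max_left _ _))
  have hJb : (T 2 - T (-2)) * J b = (T (2 * b) - T (-(2 * b))) * Sb :=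
    (hhabiro b).trans (hext b (le_max_right _ _))
  set E : LaurentPolynomial ℂ := (T 2 + 1) * (T (4 * n - 2) - 1) with hE
  -- first key divisibility
  have hE1 : E ∣ (T (2 * a) - T (-(2 * a))) + (T (2 * b) - T (-(2 * b))) := by
    have r1 : (T (2 * (a - b)) : LaurentPolynomial ℂ) * T (2 * b) = T (2 * a) := by
      rw [← T_add]; congr 1; ring
    have r2 : (T (4 * n - 2) : LaurentPolynomial ℂ) * T (-(2 * (a + b))) = 1 := by
      rw [← T_add, show (4 * n - 2) + -(2 * (a + b)) = 0 by omega, T_zero]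
    have r3 : (T (2 * b) : LaurentPolynomial ℂ) * T (-(2 * (a + b))) = T (-(2 * a)) := by
      rw [← T_add]; congr 1; ring
    have r4 : (T (2 * a) : LaurentPolynomial ℂ) * T (-(2 * (a + b))) = T (-(2 * b)) := by
      rw [← T_add]; congr 1; ring
    have e1 : ((T (2 * a) : LaurentPolynomial ℂ) - T (-(2 * a))) + (T (2 * b) - T (-(2 * b)))
        = ((T (2 * (a - b)) + 1) * (T (4 * n - 2) - 1))
            * (T (2 * b) * T (-(2 * (a + b)))) := by
      linear_combination (T (-(2 * (a + b))) - T (-(2 * (a + b))) * T (4 * n - 2)) * r1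
        - (T (2 * a) + T (2 * b)) * r2 + r3 + r4
    rw [e1]
    exact Dvd.dvd.mul_right (mul_dvd_mul (Tdvd (a - b) ⟨j, by omega⟩) dvd_rfl) _
  -- second key divisibility
  have hW1 : (T 2 + 1 : LaurentPolynomial ℂ) ∣ T (4 * n - 2) + 1 := by
    have := Tdvd (2 * n - 1) ⟨n - 1, by ring⟩
    rwa [show 2 * (2 * n - 1) = 4 * n - 2 by ring] at this
  have hxy : E ∣ (T (4 * a) + T (-(4 * a))) - (T (4 * b) + T (-(4 * b))) := by
    have s2 : (T (4 * n - 2) : LaurentPolynomial ℂ)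
        * (T (4 * n - 2) * T (-(4 * (a + b)))) = 1 := by
      rw [← T_add, ← T_add, show (4 * n - 2) + ((4 * n - 2) + -(4 * (a + b))) = 0 by omega,
        T_zero]
    have s3 : (T (4 * a) : LaurentPolynomial ℂ) * T (-(4 * (a + b))) = T (-(4 * b)) := by
      rw [← T_add]; congr 1; ring
    have s4 : (T (4 * b) : LaurentPolynomial ℂ) * T (-(4 * (a + b))) = T (-(4 * a)) := by
      rw [← T_add]; congr 1; ring
    have e2 : ((T (4 * a) : LaurentPolynomial ℂ) + T (-(4 * a))) - (T (4 * b) + T (-(4 * b)))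
        = ((T (4 * n - 2) + 1) * (T (4 * n - 2) - 1))
            * ((T (4 * a) - T (4 * b)) * T (-(4 * (a + b)))) := by
      linear_combination (-(T (4 * a) - T (4 * b))) * s2 + s3 - s4
    rw [e2]
    exact Dvd.dvd.mul_right (mul_dvd_mul hW1 dvd_rfl) _
  have hE2 : ∀ k : ℕ, E ∣ habiroC a k - habiroC b k := by
    intro k
    have hform : ∀ m : ℤ, habiroC m k = ∏ i ∈ Finset.range k,
        ((T (4 * m) + T (-(4 * m)))
          - (T (4 * ((i : ℤ) + 1)) + T (-(4 * ((i : ℤ) + 1))))) := fun m =>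
      Finset.prod_congr rfl (fun i _ => by ring)
    rw [hform a, hform b]
    exact dvd_trans hxy (prod_sub_dvd _ _
      (fun i => T (4 * ((i : ℤ) + 1)) + T (-(4 * ((i : ℤ) + 1)))) k)
  have hSdiff : E ∣ Sa - Sb := by
    rw [hSa, hSb, ← Finset.sum_sub_distrib]
    refine Finset.dvd_sum (fun k _ => ?_)
    rw [← sub_mul]
    exact (hE2 k).mul_right _
  have hmain : E ∣ (T 2 - T (-2)) * (J a + J b) := by
    have hsplit : (T 2 - T (-2)) * (J a + J b)
        = (T (2 * a) - T (-(2 * a))) * (Sa - Sb)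
          + ((T (2 * a) - T (-(2 * a))) + (T (2 * b) - T (-(2 * b)))) * Sb := by
      rw [mul_add, hJa, hJb]; ring
    rw [hsplit]
    exact dvd_add (hSdiff.mul_left _) (hE1.mul_right _)
  obtain ⟨W₀, hW⟩ := hmain
  refine ⟨T 2 * W₀, ?_⟩
  have hcancel : (T 2 + 1 : LaurentPolynomial ℂ) ≠ 0 := by
    have heq : Polynomial.toLaurent (Polynomial.X ^ 2 + 1 : Polynomial ℂ) = T 2 + 1 := by
      simp [Polynomial.toLaurent_X_pow]
    rw [← heq, Polynomial.toLaurent_ne_zero]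
    intro h
    have := congrArg (Polynomial.coeff · 0) h
    simp at this
  apply mul_left_cancel₀ hcancel
  have h0 : (T 2 : LaurentPolynomial ℂ) * T (-2) = 1 := by
    rw [← T_add, show (2 : ℤ) + -2 = 0 by ring, T_zero]
  linear_combination T 2 * hW + (J a + J b) * h0
end

section
/- Let M = ℂ(q)[X, X⁻¹] ⊗ V for a finite-dimensional vector space V, with operators S·(f(X)⊗v) = f(X⁻¹)⊗v and P·(f(X)⊗v) = f(q⁻²X)⊗v. Suppose A(X), B(X) are ℂ(q)[X,X⁻¹]-linear endomorphisms of M (matrices over ℂ(q)[X,X⁻¹]) satisfying B(X⁻¹)B(X) = Id and A(X)B(q⁻²X)A(q²X⁻¹) = B(X). Set Y := A(X)P and s := B(X)S. If furthermore (1 − B(X)A(X⁻¹))M ⊆ (1 − q²X²)M, then the operator U₀ := (1 − q²X²)⁻¹(1 − sY), a priori defined on the localization of M at nonzero polynomials in X, maps M into M. -/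
open LaurentPolynomial

noncomputable section

/-- Substitution `X ↦ c·X⁻¹` on Laurent polynomials over `ℂ(q)`. -/
def substInvScale (c : Kq) (f : LaurentPolynomial Kq) : LaurentPolynomial Kq :=
  Finsupp.sum (AddMonoidAlgebra.coeff f) (fun n a => C (a * c ^ n) * T (-n))

lemma substInv_eq (f : LaurentPolynomial Kq) : substInv f = invert f := by
  rw [substInv]
  conv_rhs => rw [← AddMonoidAlgebra.sum_coeff_single f]
  rw [map_finsuppSum]
  exact Finsupp.sum_congr (fun n _ => by rw [single_eq_C_mul_T, map_mul, invert_C, invert_T])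

lemma hq : (qq : Kq) ≠ 0 := RatFunc.X_ne_zero
lemma hc : (qq ^ (-2 : ℤ) : Kq) ≠ 0 := zpow_ne_zero _ hq
lemma hcc : (qq ^ (-2 : ℤ) : Kq) * qq ^ 2 = 1 := by
  rw [← zpow_natCast qq 2, ← zpow_add₀ hq]; norm_num

lemma key_dvd_nat (m : ℕ) :
    (1 - C (qq ^ 2) * T 2) ∣
      (T (m : ℤ) - C ((qq ^ (-2 : ℤ)) ^ (m : ℤ)) * T (-(m : ℤ))) := by
  induction m with
  | zero => simp
  | succ m ih =>
    obtain ⟨e, he⟩ := ih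
    refine ⟨T 1 * e + C ((qq ^ (-2 : ℤ)) ^ (m : ℤ)) * (T (-(m:ℤ)) * T (-1)) *
      (-C (qq ^ (-2 : ℤ))), ?_⟩
    have h1 : T ((m : ℤ) + 1) = T (m : ℤ) * T 1 := T_add (R := Kq) _ _
    have h2 : (T (-((m : ℤ) + 1)) : LaurentPolynomial Kq) = T (-(m : ℤ)) * T (-1) := by
      rw [← T_add]; ring_nf
    have h3 : (T 2 : LaurentPolynomial Kq) = T 1 * T 1 := by
      rw [← T_add]; norm_num
    have hts : (T 1 : LaurentPolynomial Kq) * T (-1) = 1 := by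
      rw [← T_add]; norm_num
    have hzp : (qq ^ (-2 : ℤ)) ^ ((m : ℤ) + 1) = (qq ^ (-2 : ℤ)) ^ (m : ℤ) * qq ^ (-2 : ℤ) :=
      zpow_add_one₀ hc _
    have hCcc : (C (qq ^ (-2:ℤ)) : LaurentPolynomial Kq) * C (qq ^ 2) = 1 := by
      rw [← map_mul, hcc, map_one]
    push_cast
    rw [h1, h2, hzp, map_mul, h3]
    linear_combination (T 1 : LaurentPolynomial Kq) * he
      - (C ((qq ^ (-2:ℤ)) ^ (m:ℤ)) * T (-(m:ℤ)) * T 1 * C (qq ^ 2) * C (qq ^ (-2:ℤ))) * hts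
      - (C ((qq ^ (-2:ℤ)) ^ (m:ℤ)) * T (-(m:ℤ)) * T 1) * hCcc
      - (T 1 * C (qq ^ 2) * e) * h3

lemma key_dvd (n : ℤ) :
    (1 - C (qq ^ 2) * T 2) ∣
      (T n - C ((qq ^ (-2 : ℤ)) ^ n) * T (-n)) := by
  rcases Int.natAbs_eq n with h | h
  · rw [h]; exact key_dvd_nat _
  · obtain ⟨e, he⟩ := key_dvd_nat n.natAbs
    refine ⟨-C ((qq ^ (-2:ℤ)) ^ n) * e, ?_⟩
    have hinv : ((qq ^ (-2:ℤ)) ^ n : Kq) * (qq ^ (-2:ℤ)) ^ (n.natAbs : ℤ) = 1 := by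
      rw [← zpow_add₀ hc]
      rw [h]; simp
    have hC : (C ((qq ^ (-2:ℤ)) ^ n) : LaurentPolynomial Kq) *
        C ((qq ^ (-2:ℤ)) ^ (n.natAbs : ℤ)) = 1 := by
      rw [← map_mul, hinv, map_one]
    have h1 : (T n : LaurentPolynomial Kq) = T (-(n.natAbs : ℤ)) := by conv_lhs => rw [h]
    have h2 : (T (-n) : LaurentPolynomial Kq) = T ((n.natAbs : ℤ)) := by conv_lhs => rw [h, neg_neg]
    rw [h1, h2]
    linear_combination (-C ((qq ^ (-2:ℤ)) ^ n) : LaurentPolynomial Kq) * he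
      - T (-(n.natAbs:ℤ)) * hC

lemma substScale_single (c : Kq) (n : ℤ) (a : Kq) :
    substScale c (AddMonoidAlgebra.single n a) = C (a * c ^ n) * T n := by
  rw [substScale, AddMonoidAlgebra.coeff_single, Finsupp.sum_single_index]; simp

lemma substScale_add (c : Kq) (f g : LaurentPolynomial Kq) :
    substScale c (f + g) = substScale c f + substScale c g := by
  rw [substScale, substScale, substScale, AddMonoidAlgebra.coeff_add]
  apply Finsupp.sum_add_index (by intros; simp) (by intros; rw [add_mul, map_add, add_mul])

lemma scalar_dvd (f : LaurentPolynomial Kq) :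
    ∃ h, f - substInv (substScale (qq ^ (-2 : ℤ)) f) = (1 - C (qq ^ 2) * T 2) * h := by
  induction f using AddMonoidAlgebra.induction with
  | zero => exact ⟨0, by simp [substScale, substInv]⟩
  | single_add n a f _ _ ih =>
    obtain ⟨h, hh⟩ := ih
    obtain ⟨e, he⟩ := key_dvd n
    refine ⟨C a * e + h, ?_⟩
    rw [substScale_add, substInv_eq, map_add, ← substInv_eq, ← substInv_eq,
      substScale_single, substInv_eq, map_mul, invert_C, invert_T]
    rw [single_eq_C_mul_T, map_mul]
    linear_combination hh + (C a : LaurentPolynomial Kq) * he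

/-- Let `M = ℂ(q)[X,X⁻¹] ⊗ V ≅ (Fin d → ℂ(q)[X,X⁻¹])` for a finite-dimensional `V`,
with `S·(f(X)⊗v) = f(X⁻¹)⊗v` and `P·(f(X)⊗v) = f(q⁻²X)⊗v`.  Suppose the matrices
`A(X), B(X)` over `ℂ(q)[X,X⁻¹]` satisfy `B(X⁻¹)B(X) = Id` and
`A(X)B(q⁻²X)A(q²X⁻¹) = B(X)`, and set `Y := A(X)P`, `s := B(X)S`.  If
`(1 − B(X)A(X⁻¹))M ⊆ (1 − q²X²)M`, then `U₀ = (1 − q²X²)⁻¹(1 − sY)` maps `M` into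
`M`, i.e. for every `m ∈ M` there is `m' ∈ M` with `(1 − q²X²)·m' = m − sY·m`. -/
theorem U0_preserves_module (d : ℕ)
    (A B : Matrix (Fin d) (Fin d) (LaurentPolynomial Kq))
    (hB : (B.map substInv) * B = 1)
    (hA : A * (B.map (substScale (qq ^ (-2 : ℤ)))) * (A.map (substInvScale (qq ^ 2))) = B)
    (hKey : ∀ v : Fin d → LaurentPolynomial Kq,
      ∃ w : Fin d → LaurentPolynomial Kq,
        ((1 : LaurentPolynomial Kq) - C (qq ^ 2) * T 2) • w
          = ((1 : Matrix (Fin d) (Fin d) (LaurentPolynomial Kq))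
              - B * (A.map substInv)).mulVec v) :
    ∀ v : Fin d → LaurentPolynomial Kq,
      ∃ w : Fin d → LaurentPolynomial Kq,
        ((1 : LaurentPolynomial Kq) - C (qq ^ 2) * T 2) • w
          = v - B.mulVec (fun i =>
              substInv ((A.mulVec (fun k => substScale (qq ^ (-2 : ℤ)) (v k))) i)) := by
  intro v
  set g : LaurentPolynomial Kq := (1 : LaurentPolynomial Kq) - C (qq ^ 2) * T 2 with hg
  set N : Matrix (Fin d) (Fin d) (LaurentPolynomial Kq) := B * (A.map substInv) with hN
  -- rewrite the RHS
  have hrw : B.mulVec (fun i =>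
        substInv ((A.mulVec (fun k => substScale (qq ^ (-2 : ℤ)) (v k))) i))
      = N.mulVec (fun k => substInv (substScale (qq ^ (-2 : ℤ)) (v k))) := by
    rw [hN, ← Matrix.mulVec_mulVec]
    congr 1
    funext i
    simp only [Matrix.mulVec, dotProduct, Matrix.map_apply, substInv_eq,
      map_sum, map_mul]
  obtain ⟨w₁, hw₁⟩ := hKey v
  choose h hh using fun k => scalar_dvd (v k)
  refine ⟨w₁ + N.mulVec h, ?_⟩
  rw [hrw]
  have h2 : N.mulVec (fun k => substInv (substScale (qq ^ (-2 : ℤ)) (v k)))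
      = N.mulVec v - g • N.mulVec h := by
    rw [← Matrix.mulVec_smul, ← Matrix.mulVec_sub]
    have h3 : (fun k => substInv (substScale (qq ^ (-2 : ℤ)) (v k))) = v - g • h := by
      funext k
      show substInv (substScale (qq ^ (-2 : ℤ)) (v k)) = v k - g * h k
      linear_combination - hh k
    rw [h3]
  rw [h2, smul_add, hw₁, Matrix.sub_mulVec, Matrix.one_mulVec]
  abel

end
end
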